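/- arXiv:2112.07524 — 4 statements merged into one kernel-verified Lean document; each statement's English description precedes it below -/
import Mathlib

section
/- A graph G has edge-treewidth at most 1 if and only if G is a forest. -/
open Classical

/-- A finite loopless multigraph: a finite vertex type, a finite edge type, and an
endpoint function assigning to every edge an unordered pair of distinct vertices. -/
structure FinMGraph where
  V : Type
  E : Type
  [fV : Fintype V]
  [fE : Fintype E]
  [dV : DecidableEq V]
  ends : E → Sym2 V
  loopless : ∀ e, ¬ (ends e).IsDiag

attribute [instance] FinMGraph.fV FinMGraph.fE FinMGraph.dV

namespace FinMGraph

variable (G : FinMGraph)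

/-- One-step adjacency inside the vertex set `S` (i.e. in the induced subgraph `G[S]`). -/
def stepIn (S : Set G.V) (a b : G.V) : Prop :=
  a ∈ S ∧ b ∈ S ∧ ∃ e : G.E, G.ends e = s(a, b)

/-- The vertex set of the connected component of `v` in the induced subgraph `G[S]`. -/
def comp (S : Set G.V) (v : G.V) : Set G.V :=
  {w | Relation.ReflTransGen (G.stepIn S) v w}

/-- The number of edges (counted with multiplicity) with exactly one endpoint in `X`. -/
noncomputable def cut (X : Set G.V) : ℕ :=
  Nat.card {e : G.E // ∃ a b, G.ends e = s(a, b) ∧ a ∈ X ∧ b ∉ X}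

/-- For a layout `L` (a linear ordering of the vertices) the set `S_i` of vertices
occurring at position `i` or later. -/
def tail (L : Fin (Fintype.card G.V) ≃ G.V) (i : Fin (Fintype.card G.V)) : Set G.V :=
  {v | i ≤ L.symm v}

/-- The cost `δ^ec(i) = |E_G(C_G(S_i, x_i))|` of position `i` in the layout `L`. -/
noncomputable def cost (L : Fin (Fintype.card G.V) ≃ G.V) (i : Fin (Fintype.card G.V)) : ℕ :=
  G.cut (G.comp (G.tail L i) (L i))

/-- The edge-treewidth of `G`: the minimum over all layouts of the maximum cost. -/
noncomputable def etw : ℕ :=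
  sInf {k | ∃ L : Fin (Fintype.card G.V) ≃ G.V, ∀ i, G.cost L i ≤ k}

end FinMGraph

namespace FinMGraph

variable (G : FinMGraph)

/-- `G` is a forest: every edge is a bridge, i.e. after removing an edge its two
endpoints are no longer connected. -/
def IsForest : Prop :=
  ∀ (e : G.E) (a b : G.V), G.ends e = s(a, b) →
    ¬ Relation.ReflTransGen (fun x y => ∃ f : G.E, f ≠ e ∧ G.ends f = s(x, y)) a b

/-- A cycle of length `k` in `G`, given by an injective cyclic sequence of vertices and an
injective sequence of distinct edges joining consecutive vertices. -/
def IsCycleOn (k : ℕ) (v : ZMod k → G.V) (f : ZMod k → G.E) : Prop :=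
  2 ≤ k ∧ Function.Injective v ∧ Function.Injective f ∧
    ∀ i : ZMod k, G.ends (f i) = s(v i, v (i + 1))

/-- `G` is a cactus: every edge belongs to at most one cycle, i.e. any two cycles
sharing an edge have the same edge set. -/
def IsCactus : Prop :=
  ∀ (k₁ : ℕ) (v₁ : ZMod k₁ → G.V) (f₁ : ZMod k₁ → G.E)
    (k₂ : ℕ) (v₂ : ZMod k₂ → G.V) (f₂ : ZMod k₂ → G.E),
    G.IsCycleOn k₁ v₁ f₁ → G.IsCycleOn k₂ v₂ f₂ →
    (∃ e, e ∈ Set.range f₁ ∧ e ∈ Set.range f₂) → Set.range f₁ = Set.range f₂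

/-- A walk from `a` to `b` using the listed edges, in order. -/
inductive Walk : G.V → G.V → List G.E → Prop
  | nil (v : G.V) : Walk v v []
  | cons {a b c : G.V} {e : G.E} {es : List G.E} :
      G.ends e = s(a, b) → Walk b c es → Walk a c (e :: es)

/-- `H` is a subgraph of `G`. -/
def IsSubgraphOf (H : FinMGraph) : Prop :=
  ∃ (φ : H.V ↪ G.V) (ψ : H.E ↪ G.E), ∀ e, G.ends (ψ e) = (H.ends e).map φ

/-- The edge-degree of `v`: the number of incident edges, counted with multiplicity. -/
noncomputable def edeg (v : G.V) : ℕ :=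
  Nat.card {e : G.E // v ∈ G.ends e}

/-- The vertex-degree of `v`: the number of distinct neighbours of `v`. -/
noncomputable def vdeg (v : G.V) : ℕ :=
  Nat.card {w : G.V // w ≠ v ∧ ∃ e : G.E, G.ends e = s(v, w)}

/-- `H` is obtained from `G` by contracting one edge `e = {x,y}` whose endpoints both
have vertex-degree two and edge-degree two. -/
def ContractStep (H : FinMGraph) : Prop :=
  ∃ (x y : G.V) (e : G.E), G.ends e = s(x, y) ∧
    G.vdeg x = 2 ∧ G.edeg x = 2 ∧ G.vdeg y = 2 ∧ G.edeg y = 2 ∧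
    ∃ (φ : G.V → H.V) (ψ : {f : G.E // f ≠ e} ≃ H.E),
      Function.Surjective φ ∧
      (∀ v w : G.V, φ v = φ w ↔ (v = w ∨ (v = x ∧ w = y) ∨ (v = y ∧ w = x))) ∧
      ∀ f : {f : G.E // f ≠ e}, H.ends (ψ f) = (G.ends f.1).map φ

/-- `H` is a weak topological minor of `G`: `H` is obtained from a subgraph of `G` by
repeatedly contracting edges whose endpoints have vertex-degree two and edge-degree two. -/
def IsWeakTopMinorOf (H G : FinMGraph) : Prop :=
  ∃ S : FinMGraph, S.IsSubgraphOf G ∧ Relation.ReflTransGen FinMGraph.ContractStep S H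

/-- The induced subgraph `G[S]` is connected. -/
def ConnectedOn (S : Set G.V) : Prop :=
  ∀ a ∈ S, ∀ b ∈ S, Relation.ReflTransGen (G.stepIn S) a b

/-- `G` is connected. -/
def Connected : Prop := G.ConnectedOn Set.univ

/-- `G` is biconnected: nonempty and removing any single vertex leaves it connected. -/
def Biconnected : Prop :=
  Nonempty G.V ∧ ∀ v : G.V, G.ConnectedOn {w | w ≠ v}

/-- The minimum cost over layouts whose first vertex is `u`. -/
noncomputable def etwFrom (u : G.V) : ℕ :=
  sInf {k | ∃ L : Fin (Fintype.card G.V) ≃ G.V, (L.symm u : ℕ) = 0 ∧ ∀ i, G.cost L i ≤ k}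

/-- The sub-multigraph of `G` on the same vertex set whose edges are those in `F`. -/
noncomputable def restrictE (F : Set G.E) : FinMGraph :=
  { V := G.V, E := {e : G.E // e ∈ F}, ends := fun e => G.ends e.1,
    loopless := fun e => G.loopless e.1 }

/-- Two edges lie in a common block: they are equal or some cycle contains both. -/
def SameBlock (e f : G.E) : Prop :=
  e = f ∨ ∃ (k : ℕ) (v : ZMod k → G.V) (g : ZMod k → G.E),
    G.IsCycleOn k v g ∧ e ∈ Set.range g ∧ f ∈ Set.range g

/-- The block of `G` containing the edge `e`. -/
noncomputable def blockOf (e : G.E) : FinMGraph :=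
  G.restrictE {f | G.SameBlock e f}

/-- The number of vertices outside `X` having a neighbour in `X`. -/
noncomputable def ncut (X : Set G.V) : ℕ :=
  Nat.card {v : G.V // v ∉ X ∧ ∃ x ∈ X, ∃ e : G.E, G.ends e = s(v, x)}

/-- Treewidth, via its layout characterization: the minimum over layouts of the
maximum of `|N_G(C_G(S_i, x_i))|`. -/
noncomputable def twl : ℕ :=
  sInf {k | ∃ L : Fin (Fintype.card G.V) ≃ G.V,
    ∀ i, G.ncut (G.comp (G.tail L i) (L i)) ≤ k}

/-- The maximum edge-degree of `G`. -/
noncomputable def maxEdeg : ℕ :=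
  sSup {m | ∃ v : G.V, m = G.edeg v}

end FinMGraph

/-- A tree-layout of `G`: a rooted tree (given by a parent function under which every
node eventually reaches the root) together with an injective mapping `τ` of the vertices
of `G` into the nodes such that the endpoints of every edge are mapped to comparable
(ancestor/descendant) nodes. -/
structure TreeLayout (G : FinMGraph) where
  T : Type
  par : T → T
  root : T
  par_root : par root = root
  reaches_root : ∀ t : T, ∃ n : ℕ, par^[n] t = root
  τ : G.V → T
  inj : Function.Injective τ
  comparable : ∀ (e : G.E) (a b : G.V), G.ends e = s(a, b) →
    (∃ n : ℕ, par^[n] (τ a) = τ b) ∨ (∃ n : ℕ, par^[n] (τ b) = τ a)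

/-- The set `X_T(u)` of vertices of `G` mapped to descendants of the node `u`. -/
def TreeLayout.region {G : FinMGraph} (TL : TreeLayout G) (u : TL.T) : Set G.V :=
  {x | ∃ n : ℕ, TL.par^[n] (TL.τ x) = u}

/-- The theta graph `θ k`: two vertices joined by `k` parallel edges. -/
def theta (k : ℕ) : FinMGraph :=
  { V := Fin 2, E := Fin k, ends := fun _ => s((0 : Fin 2), 1),
    loopless := fun _ => by rw [Sym2.mk_isDiag_iff]; decide }

/-- The cycle on `n ≥ 2` vertices. -/
def cyc (n : ℕ) (h : 2 ≤ n) : FinMGraph :=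
  letI : NeZero n := ⟨by omega⟩
  letI : Fact (1 < n) := ⟨h⟩
  { V := ZMod n, E := ZMod n, ends := fun i => s(i, i + 1),
    loopless := fun i => by
      rw [Sym2.mk_isDiag_iff]
      exact fun hh => one_ne_zero (left_eq_add.mp hh) }

/-- The multigraph `Z_n^3`, obtained from the cycle on `n ≥ 2` vertices by doubling
every edge. -/
def Z3 (n : ℕ) (h : 2 ≤ n) : FinMGraph :=
  letI : NeZero n := ⟨by omega⟩
  letI : Fact (1 < n) := ⟨h⟩
  { V := ZMod n, E := ZMod n × Fin 2, ends := fun p => s(p.1, p.1 + 1),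
    loopless := fun p => by
      rw [Sym2.mk_isDiag_iff]
      exact fun hh => one_ne_zero (left_eq_add.mp hh) }

namespace EtwAux
open Relation

variable {G : FinMGraph}

def estep (G : FinMGraph) (x y : G.V) : Prop := ∃ e : G.E, G.ends e = s(x, y)

lemma estep_symm : Symmetric (estep G) := fun _ _ ⟨e, he⟩ => ⟨e, by rw [he, Sym2.eq_swap]⟩

def astep (G : FinMGraph) (e : G.E) (x y : G.V) : Prop := ∃ f, f ≠ e ∧ G.ends f = s(x, y)

lemma astep_symm {e : G.E} : Symmetric (astep G e) :=
  fun _ _ ⟨f, hf, he⟩ => ⟨f, hf, by rw [he, Sym2.eq_swap]⟩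

def conn (G : FinMGraph) : G.V → G.V → Prop := ReflTransGen (estep G)

lemma conn_symm : Symmetric (conn G) := fun a b (h : ReflTransGen (estep G) a b) => by
  haveI : Std.Symm (estep G) := ⟨fun x y hh => estep_symm hh⟩
  exact (Std.Symm.symm a b h : ReflTransGen (estep G) b a)

def csetoid (G : FinMGraph) : Setoid G.V :=
  ⟨conn G, ⟨fun _ => .refl, fun h => conn_symm h, fun h h' => .trans h h'⟩⟩

noncomputable def root (G : FinMGraph) (v : G.V) : G.V := (Quotient.mk (csetoid G) v).out

lemma conn_root (v : G.V) : conn G (root G v) v := @Quotient.mk_out _ (csetoid G) v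

lemma root_eq_of_conn {u v : G.V} (h : conn G u v) : root G u = root G v := by
  exact congrArg Quotient.out (Quotient.sound (s := csetoid G) h)

def reachN (G : FinMGraph) : ℕ → G.V → G.V → Prop
  | 0, u, v => u = v
  | n+1, u, v => ∃ z, reachN G n u z ∧ estep G z v

lemma reachN_exists {u v : G.V} (h : conn G u v) : ∃ n, reachN G n u v := by
  induction h with
  | refl => exact ⟨0, rfl⟩
  | tail _ hstep ih => obtain ⟨n, hn⟩ := ih; exact ⟨n+1, _, hn, hstep⟩

lemma conn_of_reachN : ∀ {n : ℕ} {u v : G.V}, reachN G n u v → conn G u v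
  | 0, _, _, h => by cases h; exact .refl
  | n+1, _, _, ⟨_, hz, hs⟩ => (conn_of_reachN hz).tail hs

lemma exists_reach_root (v : G.V) : ∃ n, reachN G n (root G v) v := reachN_exists (conn_root v)

noncomputable def d (G : FinMGraph) (v : G.V) : ℕ := Nat.find (exists_reach_root v)

lemma d_spec (v : G.V) : reachN G (d G v) (root G v) v := Nat.find_spec (exists_reach_root v)

lemma d_min {n : ℕ} {v : G.V} (h : reachN G n (root G v) v) : d G v ≤ n :=
  Nat.find_min' (exists_reach_root v) h

lemma root_eq_self_of_d_eq_zero {v : G.V} (h : d G v = 0) : root G v = v := by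
  have hs := d_spec (G := G) v; rw [h] at hs; exact hs

lemma d_adj {u w : G.V} (h : estep G u w) : d G w ≤ d G u + 1 := by
  have hr : root G u = root G w := root_eq_of_conn (ReflTransGen.single h)
  exact d_min ⟨u, hr ▸ d_spec u, h⟩

lemma exists_parP (v : G.V) (h : 0 < d G v) :
    ∃ p : G.V × G.E, G.ends p.2 = s(p.1, v) ∧ d G p.1 + 1 = d G v := by
  obtain ⟨m, hm⟩ : ∃ m, d G v = m + 1 := ⟨d G v - 1, by omega⟩
  have hs := d_spec (G := G) v
  rw [hm] at hs
  obtain ⟨z, hz, e, he⟩ := hs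
  have hroot : root G z = root G v :=
    root_eq_of_conn ((conn_symm (conn_of_reachN hz)).trans (conn_root v))
  have h1 : d G z ≤ m := d_min (by rw [hroot]; exact hz)
  have h2 : d G v ≤ d G z + 1 := d_adj ⟨e, he⟩
  refine ⟨(z, e), he, ?_⟩
  show d G z + 1 = d G v
  omega

noncomputable def parP (v : G.V) (h : 0 < d G v) : G.V × G.E := Classical.choose (exists_parP v h)

lemma parP_ends (v : G.V) (h : 0 < d G v) : G.ends (parP v h).2 = s((parP v h).1, v) :=
  (Classical.choose_spec (exists_parP v h)).1

lemma parP_d (v : G.V) (h : 0 < d G v) : d G (parP v h).1 + 1 = d G v :=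
  (Classical.choose_spec (exists_parP v h)).2

noncomputable def par (G : FinMGraph) (v : G.V) : G.V :=
  if h : 0 < d G v then (parP v h).1 else v

lemma par_eq (v : G.V) (h : 0 < d G v) : par G v = (parP v h).1 := dif_pos h

lemma d_le_of_iter {x : G.V} :
    ∀ (n : ℕ) (v : G.V), (par G)^[n] v = x → d G x ≤ d G v ∧ (d G x = d G v → v = x) := by
  intro n
  induction n with
  | zero =>
    intro v hv
    rw [Function.iterate_zero_apply] at hv
    subst hv
    exact ⟨le_rfl, fun _ => rfl⟩
  | succ n ih =>
    intro v hv
    rw [Function.iterate_succ_apply] at hv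
    by_cases h : 0 < d G v
    · have hd : d G (par G v) + 1 = d G v := by rw [par_eq v h]; exact parP_d v h
      have := ih _ hv
      exact ⟨by omega, by omega⟩
    · have hp : par G v = v := dif_neg h
      rw [hp] at hv
      exact ih _ hv

def stepPar (G : FinMGraph) (x y : G.V) : Prop := ∃ h : 0 < d G y, x = (parP y h).1

lemma chain_aux : ∀ (m : ℕ) (v : G.V), d G v ≤ m →
    ReflTransGen (fun x y => stepPar G x y ∧ d G y ≤ d G v) (root G v) v := by
  intro m
  induction m with
  | zero =>
    intro v hv
    rw [root_eq_self_of_d_eq_zero (Nat.le_zero.mp hv)]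
  | succ m ih =>
    intro v hv
    by_cases h : 0 < d G v
    · have hdp : d G (parP v h).1 + 1 = d G v := parP_d v h
      have hpe : estep G (parP v h).1 v := ⟨(parP v h).2, parP_ends v h⟩
      have hroot : root G (parP v h).1 = root G v := root_eq_of_conn (.single hpe)
      have hc := ih (parP v h).1 (by omega)
      refine ReflTransGen.tail ?_ ⟨⟨h, rfl⟩, le_refl _⟩
      rw [← hroot]
      exact ReflTransGen.mono (r := fun x y => stepPar G x y ∧ d G y ≤ d G (parP v h).1)
        (p := fun x y => stepPar G x y ∧ d G y ≤ d G v) (fun x y ⟨hs, hd⟩ => ⟨hs, by omega⟩) _ _ hc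
    · rw [root_eq_self_of_d_eq_zero (by omega)]

lemma ne_of_ends {e : G.E} {u w : G.V} (he : G.ends e = s(u, w)) : u ≠ w := by
  intro h
  exact G.loopless e (by rw [he, Sym2.mk_isDiag_iff]; exact h)

lemma forest_no_walk {e : G.E} (hF : G.IsForest) {u w : G.V} (he : G.ends e = s(u, w)) :
    ¬ ReflTransGen (astep G e) u w := hF e u w he

lemma astep_of_stepPar {e : G.E} {x y : G.V} (hs : stepPar G x y)
    (hne : (parP y hs.fst).2 ≠ e) : astep G e x y := by
  obtain ⟨h, hx⟩ := hs
  exact ⟨(parP y h).2, hne, by rw [parP_ends y h, ← hx]⟩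

lemma conn_astep {e : G.E} {u v : G.V} (h : ReflTransGen (astep G e) u v) :
    ReflTransGen (astep G e) v u := by
  haveI : Std.Symm (astep G e) := ⟨fun x y hh => astep_symm hh⟩
  exact (Std.Symm.symm u v h : ReflTransGen (astep G e) v u)

lemma forest_d_ne {e : G.E} (hF : G.IsForest) {u w : G.V} (he : G.ends e = s(u, w)) :
    d G u ≠ d G w := by
  intro hd
  have hne : u ≠ w := ne_of_ends he
  have hroot : root G u = root G w := root_eq_of_conn (ReflTransGen.single ⟨e, he⟩)
  have key : ∀ v : G.V, d G v ≤ d G u →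
      ReflTransGen (astep G e) (root G v) v := by
    intro v hv
    refine ReflTransGen.mono (p := astep G e) ?_ _ _ (chain_aux (d G v) v le_rfl)
    rintro x y ⟨hs, hdy⟩
    refine astep_of_stepPar hs ?_
    intro hEq
    have hey : G.ends (parP y hs.fst).2 = s((parP y hs.fst).1, y) := parP_ends y hs.fst
    rw [hEq, he] at hey
    have hdxy : d G (parP y hs.fst).1 + 1 = d G y := parP_d y hs.fst
    rcases Sym2.eq_iff.mp hey.symm with ⟨h1, h2⟩ | ⟨h1, h2⟩
    · rw [h1] at hdxy; rw [h2] at hdxy; omega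
    · rw [h1] at hdxy; rw [h2] at hdxy; omega
  have w1 : ReflTransGen (astep G e) u (root G u) := conn_astep (key u le_rfl)
  have w2 : ReflTransGen (astep G e) (root G w) w := key w (le_of_eq hd.symm)
  rw [hroot] at w1
  exact forest_no_walk hF he (w1.trans w2)

lemma forest_par {e : G.E} (hF : G.IsForest) {u w : G.V} (he : G.ends e = s(u, w))
    (hd : d G u < d G w) :
    ∃ h : 0 < d G w, e = (parP w h).2 ∧ (parP w h).1 = u := by
  have hne : u ≠ w := ne_of_ends he
  have h : 0 < d G w := by omega
  have hdw : d G w = d G u + 1 := le_antisymm (d_adj ⟨e, he⟩) (by omega)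
  have hmain : e = (parP w h).2 := by
    by_contra hc
    have hroot : root G u = root G w := root_eq_of_conn (ReflTransGen.single ⟨e, he⟩)
    -- walk from root u to u avoiding e
    have wu : ReflTransGen (astep G e) (root G u) u := by
      refine ReflTransGen.mono (p := astep G e) ?_ _ _ (chain_aux (d G u) u le_rfl)
      rintro x y ⟨hs, hdy⟩
      refine astep_of_stepPar hs ?_
      intro hEq
      have hey : G.ends (parP y hs.fst).2 = s((parP y hs.fst).1, y) := parP_ends y hs.fst
      rw [hEq, he] at hey
      have hdxy : d G (parP y hs.fst).1 + 1 = d G y := parP_d y hs.fst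
      rcases Sym2.eq_iff.mp hey.symm with ⟨h1, h2⟩ | ⟨h1, h2⟩
      · rw [h2] at hdy; omega
      · rw [h1] at hdxy; rw [h2] at hdxy; omega
    -- walk from root w to w avoiding e
    have ww : ReflTransGen (astep G e) (root G w) w := by
      refine ReflTransGen.mono (p := astep G e) ?_ _ _ (chain_aux (d G w) w le_rfl)
      rintro x y ⟨hs, hdy⟩
      refine astep_of_stepPar hs ?_
      intro hEq
      have hey : G.ends (parP y hs.fst).2 = s((parP y hs.fst).1, y) := parP_ends y hs.fst
      rw [hEq, he] at hey
      have hdxy : d G (parP y hs.fst).1 + 1 = d G y := parP_d y hs.fst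
      rcases Sym2.eq_iff.mp hey.symm with ⟨h1, h2⟩ | ⟨h1, h2⟩
      · -- x = u, y = w : the edge is the parent edge of w
        subst h2
        exact hc hEq.symm
      · rw [h1] at hdxy; rw [h2] at hdxy; omega
    exact forest_no_walk hF he (((conn_astep wu).trans (hroot ▸ ww)))
  refine ⟨h, hmain, ?_⟩
  have hey : G.ends (parP w h).2 = s((parP w h).1, w) := parP_ends w h
  rw [← hmain, he] at hey
  rcases Sym2.eq_iff.mp hey with ⟨h1, h2⟩ | ⟨h1, h2⟩
  · exact h1.symm
  · exact absurd h1 hne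

lemma forest_layout (hF : G.IsForest) :
    ∃ L : Fin (Fintype.card G.V) ≃ G.V, ∀ i, G.cost L i ≤ 1 := by
  classical
  set n := Fintype.card G.V with hn
  set e0 : Fin n ≃ G.V := (Fintype.equivFin G.V).symm with he0
  set σ := Tuple.sort (d G ∘ e0) with hσ
  set L : Fin n ≃ G.V := (σ : Equiv.Perm (Fin n)).trans e0 with hLdef
  have hmono : ∀ i j : Fin n, i ≤ j → d G (L i) ≤ d G (L j) := by
    intro i j hij
    exact Tuple.monotone_sort (d G ∘ e0) hij
  refine ⟨L, ?_⟩
  intro i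
  set x := L i with hx
  set T := G.tail L i with hT
  set C := G.comp T x with hC
  have hxT : x ∈ T := by
    show i ≤ L.symm x
    rw [hx, Equiv.symm_apply_apply]
  have hTd : ∀ v ∈ T, d G x ≤ d G v := by
    intro v hv
    have h2 : d G (L i) ≤ d G (L (L.symm v)) := hmono _ _ hv
    rwa [Equiv.apply_symm_apply] at h2
  have hnotT : ∀ v, v ∉ T → d G v ≤ d G x := by
    intro v hv
    have h1 : L.symm v ≤ i := le_of_not_ge hv
    have h2 : d G (L (L.symm v)) ≤ d G (L i) := hmono _ _ h1
    rwa [Equiv.apply_symm_apply] at h2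
  have hCT : ∀ a ∈ C, a ∈ T := by
    intro a ha
    induction ha with
    | refl => exact hxT
    | tail _ hstep _ => exact hstep.2.1
  have hdesc : ∀ a ∈ C, ∃ k, (par G)^[k] a = x := by
    intro a ha
    induction ha with
    | refl => exact ⟨0, rfl⟩
    | @tail w u hwc hstep ih =>
      obtain ⟨hwT, huT, f, hf⟩ := hstep
      obtain ⟨k, hk⟩ := ih
      have hdw : d G x ≤ d G w := hTd _ hwT
      have hdu : d G x ≤ d G u := hTd _ huT
      have hne := forest_d_ne hF hf
      rcases lt_or_gt_of_ne hne with h1 | h2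
      · -- d w < d u
        obtain ⟨h', _, hp1⟩ := forest_par hF hf h1
        refine ⟨k + 1, ?_⟩
        rw [Function.iterate_succ_apply, par_eq u h', hp1, hk]
      · -- d u < d w
        have hf' : G.ends f = s(u, w) := by rw [hf, Sym2.eq_swap]
        obtain ⟨h', _, hp1⟩ := forest_par hF hf' h2
        cases k with
        | zero =>
          rw [Function.iterate_zero_apply] at hk
          subst hk
          omega
        | succ k =>
          rw [Function.iterate_succ_apply, par_eq w h', hp1] at hk
          exact ⟨k, hk⟩
  have hcut : ∀ f : G.E, (∃ a b, G.ends f = s(a, b) ∧ a ∈ C ∧ b ∉ C) →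
      ∃ h : 0 < d G x, f = (parP x h).2 := by
    rintro f ⟨a, b, hf, haC, hbC⟩
    have haT := hCT a haC
    have hbT : b ∉ T := fun hbT => hbC (ReflTransGen.tail haC ⟨haT, hbT, f, hf⟩)
    have hd1 : d G x ≤ d G a := hTd _ haT
    have hd2 : d G b ≤ d G x := hnotT _ hbT
    have hne := forest_d_ne hF hf
    have hlt : d G b < d G a := by omega
    have hf' : G.ends f = s(b, a) := by rw [hf, Sym2.eq_swap]
    obtain ⟨h', he2, hp1⟩ := forest_par hF hf' hlt
    obtain ⟨k, hk⟩ := hdesc a haC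
    cases k with
    | zero =>
      rw [Function.iterate_zero_apply] at hk
      subst hk
      exact ⟨h', he2⟩
    | succ k =>
      exfalso
      rw [Function.iterate_succ_apply, par_eq a h', hp1] at hk
      have hiter := d_le_of_iter k b hk
      have hbx : b = x := hiter.2 (by omega)
      exact hbC (hbx ▸ (ReflTransGen.refl : x ∈ C))
  show G.cut C ≤ 1
  have hsub : Subsingleton {e : G.E // ∃ a b, G.ends e = s(a, b) ∧ a ∈ C ∧ b ∉ C} := by
    constructor
    rintro ⟨f1, h1⟩ ⟨f2, h2⟩
    obtain ⟨hh1, he1⟩ := hcut f1 h1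
    obtain ⟨hh2, he2⟩ := hcut f2 h2
    have hf12 : f1 = f2 := by rw [he1, he2]
    exact Subtype.ext hf12
  exact Finite.card_le_one_iff_subsingleton.mpr hsub

def reachA (G : FinMGraph) (e : G.E) : ℕ → G.V → G.V → Prop
  | 0, u, v => u = v
  | n+1, u, v => ∃ z, reachA G e n u z ∧ astep G e z v

lemma reachA_exists {e : G.E} {u v : G.V} (h : ReflTransGen (astep G e) u v) :
    ∃ n, reachA G e n u v := by
  induction h with
  | refl => exact ⟨0, rfl⟩
  | tail _ hstep ih => obtain ⟨n, hn⟩ := ih; exact ⟨n+1, _, hn, hstep⟩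

lemma reachA_trans {e : G.E} {p : ℕ} {u v : G.V} :
    ∀ {q : ℕ} {z : G.V}, reachA G e p u v → reachA G e q v z → reachA G e (p + q) u z := by
  intro q
  induction q with
  | zero => intro z h1 h2; cases h2; exact h1
  | succ q ih =>
    rintro z h1 ⟨y, hy, hs⟩
    exact ⟨y, ih h1 hy, hs⟩

lemma reachA_head {e : G.E} {u z : G.V} (h1 : astep G e u z) :
    ∀ {n : ℕ} {v : G.V}, reachA G e n z v → reachA G e (n + 1) u v := by
  intro n
  induction n with
  | zero => intro v h2; cases h2; exact ⟨u, rfl, h1⟩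
  | succ n ih =>
    rintro v ⟨y, hy, hs⟩
    exact ⟨y, ih hy, hs⟩

lemma reachA_walk {e : G.E} : ∀ {n : ℕ} {u v : G.V}, reachA G e n u v →
    ∃ w : Fin (n+1) → G.V, w 0 = u ∧ w (Fin.last n) = v ∧
      ∀ i : Fin n, astep G e (w i.castSucc) (w i.succ) := by
  intro n
  induction n with
  | zero =>
    intro u v h
    cases h
    exact ⟨fun _ => u, rfl, rfl, fun i => i.elim0⟩
  | succ n ih =>
    rintro u v ⟨z, hz, hs⟩
    obtain ⟨w', h0, hl, hstep⟩ := ih hz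
    refine ⟨Fin.snoc w' v, ?_, ?_, ?_⟩
    · rw [show (0 : Fin (n+2)) = Fin.castSucc 0 from rfl, Fin.snoc_castSucc]
      exact h0
    · rw [Fin.snoc_last]
    · intro i
      induction i using Fin.lastCases with
      | last =>
        rw [Fin.succ_last, Fin.snoc_last, Fin.snoc_castSucc, hl]
        exact hs
      | cast j =>
        rw [Fin.succ_castSucc, Fin.snoc_castSucc, Fin.snoc_castSucc]
        exact hstep j

lemma walk_init {e : G.E} {n : ℕ} {w : Fin (n+1) → G.V}
    (hstep : ∀ i : Fin n, astep G e (w i.castSucc) (w i.succ)) :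
    ∀ i : Fin (n+1), reachA G e i.1 (w 0) (w i) := by
  intro i
  induction i using Fin.induction with
  | zero => rfl
  | succ j ih => exact ⟨w j.castSucc, ih, hstep j⟩

lemma walk_final {e : G.E} {n : ℕ} {w : Fin (n+1) → G.V}
    (hstep : ∀ i : Fin n, astep G e (w i.castSucc) (w i.succ)) :
    ∀ i : Fin (n+1), reachA G e (n - i.1) (w i) (w (Fin.last n)) := by
  intro i
  induction i using Fin.reverseInduction with
  | last => rw [Fin.val_last, Nat.sub_self]; rfl
  | cast j ih =>
    have hsub : n - j.castSucc.1 = (n - j.succ.1) + 1 := by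
      have := j.isLt
      simp only [Fin.coe_castSucc, Fin.val_succ]
      omega
    rw [hsub]
    exact reachA_head (hstep j) ih

lemma exists_simple_path {e : G.E} {a b : G.V} (hab : ReflTransGen (astep G e) a b)
    (hne : a ≠ b) :
    ∃ (m : ℕ) (w : Fin (m+1) → G.V), 0 < m ∧ Function.Injective w ∧ w 0 = a ∧
      w (Fin.last m) = b ∧ ∀ i : Fin m, astep G e (w i.castSucc) (w i.succ) := by
  classical
  have hex := reachA_exists hab
  set m := Nat.find hex with hm
  have hspec : reachA G e m a b := Nat.find_spec hex
  obtain ⟨w, h0, hl, hstep⟩ := reachA_walk hspec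
  have hmpos : 0 < m := by
    rcases Nat.eq_zero_or_pos m with h | h
    · exfalso
      rw [h] at hspec
      exact hne hspec
    · exact h
  have key : ∀ i j : Fin (m+1), i < j → w i ≠ w j := by
    intro i j hlt heq
    have r1 := walk_init hstep i
    have r2 := walk_final hstep j
    rw [h0] at r1
    rw [hl] at r2
    rw [heq] at r1
    have hcomb := reachA_trans r1 r2
    have hlt2 : i.1 + (m - j.1) < m := by
      have h1 : i.1 < j.1 := hlt
      have h2 : j.1 < m + 1 := j.isLt
      omega
    exact Nat.find_min hex hlt2 hcomb
  refine ⟨m, w, hmpos, ?_, h0, hl, hstep⟩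
  intro i j hij
  by_contra hne2
  rcases lt_trichotomy i j with h | h | h
  · exact key i j h hij
  · exact hne2 h
  · exact key j i h hij.symm

lemma isForest_of_layout {L : Fin (Fintype.card G.V) ≃ G.V}
    (hL : ∀ i, G.cost L i ≤ 1) : G.IsForest := by
  classical
  intro e a b he hab
  have hne : a ≠ b := ne_of_ends he
  obtain ⟨m, w, hm, hinj, h0, hl, hstep⟩ := exists_simple_path hab hne
  haveI : NeZero (m+1) := ⟨Nat.succ_ne_zero m⟩
  haveI : Fact (1 < m + 1) := ⟨by omega⟩
  -- helper val lemmas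
  have hone : (1 : ZMod (m+1)).val = 1 := ZMod.val_one (m+1)
  have hsuccval : ∀ z : ZMod (m+1), z.val < m → (z + 1).val = z.val + 1 := by
    intro z hz
    rw [ZMod.val_add_of_lt (by rw [hone]; omega), hone]
  have hcastval : ∀ z : ZMod (m+1), ((z.val : ℕ) : ZMod (m+1)) = z :=
    fun z => ZMod.natCast_rightInverse z
  have hlastz : ∀ z : ZMod (m+1), z.val = m → z + 1 = 0 := by
    intro z hz
    rw [← hcastval z, hz]
    have hself := ZMod.natCast_self (m+1)
    push_cast at hself
    exact hself
  have hmcast : ((m : ℕ) : ZMod (m+1)) ≠ 0 := by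
    intro h
    have hv := ZMod.val_natCast_of_lt (show m < m + 1 by omega)
    rw [h, ZMod.val_zero] at hv
    omega
  -- cyclic vertex sequence
  set vv : ZMod (m+1) → G.V := fun z => w ⟨z.val, ZMod.val_lt z⟩ with hvv
  have hvinj : Function.Injective vv := by
    intro z1 z2 h
    have hval : z1.val = z2.val := congrArg Fin.val (hinj h)
    exact ZMod.val_injective _ hval
  -- cyclic edge sequence
  have hgex : ∀ z : ZMod (m+1), ∃ g : G.E, G.ends g = s(vv z, vv (z + 1)) ∧
      (z.val < m → g ≠ e) ∧ (z.val = m → g = e) := by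
    intro z
    rcases lt_or_eq_of_le (Nat.lt_succ_iff.mp (ZMod.val_lt z)) with h | h
    · obtain ⟨f, hf, hfe⟩ := hstep ⟨z.val, h⟩
      have e1 : vv z = w (Fin.castSucc ⟨z.val, h⟩) := congrArg w (Fin.ext rfl)
      have e2 : vv (z + 1) = w (Fin.succ ⟨z.val, h⟩) := congrArg w (Fin.ext (hsuccval z h))
      refine ⟨f, ?_, fun _ => hf, fun hzm => absurd hzm (by omega)⟩
      rw [hfe, e1, e2]
    · refine ⟨e, ?_, fun hlt => absurd h (by omega), fun _ => rfl⟩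
      rw [hlastz z h]
      have hb : vv z = b := by
        have hfz : (⟨z.val, ZMod.val_lt z⟩ : Fin (m+1)) = Fin.last m := by
          apply Fin.ext; simpa using h
        show w ⟨z.val, ZMod.val_lt z⟩ = b
        rw [hfz, hl]
      have ha : vv 0 = a := by
        have hf0 : (⟨(0 : ZMod (m+1)).val, ZMod.val_lt 0⟩ : Fin (m+1)) = 0 := by
          apply Fin.ext; simpa using (ZMod.val_zero : (0 : ZMod (m+1)).val = 0)
        show w ⟨(0 : ZMod (m+1)).val, ZMod.val_lt 0⟩ = a
        rw [hf0, h0]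
      rw [hb, ha, he, Sym2.eq_swap]
  choose g hg hglt hgeq using hgex
  -- choose minimal-position cycle vertices
  obtain ⟨t, -, htmin⟩ := Finset.exists_min_image Finset.univ
    (fun z : ZMod (m+1) => L.symm (vv z)) ⟨0, Finset.mem_univ 0⟩
  have ht1ne : t + 1 ≠ t := by
    intro h
    have : (1 : ZMod (m+1)) = 0 := by
      have := congrArg (fun z => z - t) h
      simpa [add_comm, add_sub_cancel_right] using this
    rw [← hcastval 1, hone] at this
    rw [show ((1:ℕ) : ZMod (m+1)) = 1 from Nat.cast_one] at this
    have hv := congrArg ZMod.val this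
    rw [hone, ZMod.val_zero] at hv
    omega
  obtain ⟨t', ht'mem, ht'min⟩ := Finset.exists_min_image (Finset.univ.erase t)
    (fun z : ZMod (m+1) => L.symm (vv z)) ⟨t + 1, Finset.mem_erase.mpr ⟨ht1ne, Finset.mem_univ _⟩⟩
  have htt' : t' ≠ t := (Finset.mem_erase.mp ht'mem).1
  set q := L.symm (vv t') with hq
  set x := vv t' with hxdef
  set T := G.tail L q with hT
  set C := G.comp T x with hC
  have hkne : ∀ k : ℕ, 1 ≤ k → k ≤ m → t + (k : ZMod (m+1)) ≠ t := by
    intro k h1 h2 h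
    have hk0 : (k : ZMod (m+1)) = 0 := by
      have := congrArg (fun z => z - t) h
      simpa [add_comm, add_sub_cancel_right] using this
    have hv := ZMod.val_natCast_of_lt (show k < m + 1 by omega)
    rw [hk0, ZMod.val_zero] at hv
    omega
  have hmemT : ∀ z : ZMod (m+1), z ≠ t → vv z ∈ T := by
    intro z hz
    show q ≤ L.symm (vv z)
    exact ht'min z (Finset.mem_erase.mpr ⟨hz, Finset.mem_univ _⟩)
  have hxT : x ∈ T := hmemT t' htt'
  have hstepsym : Symmetric (G.stepIn T) := by
    rintro u1 u2 ⟨ha1, ha2, f, hf⟩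
    exact ⟨ha2, ha1, f, by rw [hf, Sym2.eq_swap]⟩
  have hrev : Symmetric (ReflTransGen (G.stepIn T)) := fun a1 b1 h => by
    haveI : Std.Symm (G.stepIn T) := ⟨fun x y hh => hstepsym hh⟩
    exact Std.Symm.symm a1 b1 h
  have hconn : ∀ k : ℕ, 1 ≤ k → k ≤ m →
      ReflTransGen (G.stepIn T) (vv (t + 1)) (vv (t + (k : ZMod (m+1)))) := by
    intro k
    induction k with
    | zero => omega
    | succ k ih =>
      intro h1 h2
      rcases Nat.eq_zero_or_pos k with hk | hk
      · subst hk
        rw [Nat.cast_one]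
      · refine ReflTransGen.tail (ih hk (by omega)) ?_
        have harith : t + ((k + 1 : ℕ) : ZMod (m+1)) = t + (k : ZMod (m+1)) + 1 := by
          push_cast
          ring
        rw [harith]
        exact ⟨hmemT _ (hkne k hk (by omega)),
          hmemT _ (by rw [← harith]; exact hkne (k+1) (by omega) h2),
          g (t + (k : ZMod (m+1))), hg _⟩
  -- x = vv (t + k0)
  set k0 := (t' - t).val with hk0def
  have hk0cast : ((k0 : ℕ) : ZMod (m+1)) = t' - t := hcastval _
  have hk0m : k0 ≤ m := Nat.lt_succ_iff.mp (ZMod.val_lt _)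
  have hk01 : 1 ≤ k0 := by
    rcases Nat.eq_zero_or_pos k0 with h | h
    · exfalso
      have : t' - t = 0 := by
        rw [← hk0cast, h, Nat.cast_zero]
      exact htt' (by rwa [sub_eq_zero] at this)
    · exact h
  have hxx : vv (t + (k0 : ZMod (m+1))) = x := by
    rw [hk0cast]
    congr 1
    ring
  have h1C : vv (t + 1) ∈ C := by
    have hc := hconn k0 hk01 hk0m
    rw [hxx] at hc
    exact hrev hc
  have hmC : vv (t + (m : ZMod (m+1))) ∈ C := by
    exact ReflTransGen.trans h1C (hconn m hm le_rfl)
  have htnotT : vv t ∉ T := by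
    intro h
    have h2 : L.symm (vv t) ≤ L.symm (vv t') := htmin t' (Finset.mem_univ _)
    have h3 : L.symm (vv t) = q := le_antisymm h2 h
    apply htt'
    apply hvinj
    apply L.symm.injective
    rw [h3, hq]
  have hCsubT : ∀ c ∈ C, c ∈ T := by
    intro c hc
    induction hc with
    | refl => exact hxT
    | tail _ hstep2 _ => exact hstep2.2.1
  have htnotC : vv t ∉ C := fun h => htnotT (hCsubT _ h)
  have hcut1 : ∃ a2 b2, G.ends (g t) = s(a2, b2) ∧ a2 ∈ C ∧ b2 ∉ C :=
    ⟨vv (t + 1), vv t, by rw [hg t, Sym2.eq_swap], h1C, htnotC⟩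
  have hgm : G.ends (g (t + (m : ZMod (m+1)))) = s(vv (t + (m : ZMod (m+1))), vv t) := by
    have := hg (t + (m : ZMod (m+1)))
    have harith : t + (m : ZMod (m+1)) + 1 = t := by
      have hmone : ((m : ℕ) : ZMod (m+1)) + 1 = 0 := by
        have hself := ZMod.natCast_self (m+1)
        push_cast at hself
        exact hself
      rw [add_assoc, hmone, add_zero]
    rwa [harith] at this
  have hcut2 : ∃ a2 b2, G.ends (g (t + (m : ZMod (m+1)))) = s(a2, b2) ∧ a2 ∈ C ∧ b2 ∉ C :=
    ⟨vv (t + (m : ZMod (m+1))), vv t, hgm, hmC, htnotC⟩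
  -- the two edges are distinct
  have hne_g : g t ≠ g (t + (m : ZMod (m+1))) := by
    rcases lt_or_eq_of_le (Nat.lt_succ_iff.mp (ZMod.val_lt t)) with h | h
    · -- t.val < m, so g t ≠ e
      rcases Nat.lt_or_ge (t + (m : ZMod (m+1))).val m with h2 | h2
      · -- both non-e edges: compare ends
        intro hEq
        have hends := congrArg G.ends hEq
        rw [hg t, hgm] at hends
        rcases Sym2.eq_iff.mp hends with ⟨ha1, ha2⟩ | ⟨ha1, ha2⟩
        · have := hvinj ha2
          have h1 : (1 : ZMod (m+1)) = 0 := by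
            have := congrArg (fun z => z - t) this
            simpa [add_comm, add_sub_cancel_right] using this
          have hv := congrArg ZMod.val h1
          rw [hone, ZMod.val_zero] at hv
          omega
        · have := hvinj ha2
          have h1 : (1 : ZMod (m+1)) = (m : ZMod (m+1)) := by
            have := congrArg (fun z => z - t) this
            simpa [add_comm, add_sub_cancel_right] using this
          have hv := congrArg ZMod.val h1
          rw [hone, ZMod.val_natCast_of_lt (show m < m + 1 by omega)] at hv
          -- 1 = m; then m = 1, t.val < 1 so t.val = 0, and (t+m).val = 1 = m contradicting h2
          have h6 : ((m : ℕ) : ZMod (m+1)) = 1 := by rw [← hv]; exact Nat.cast_one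
          rw [h6] at h2
          rw [hsuccval t h] at h2
          omega
      · -- (t+m).val = m, so g (t+m) = e but g t ≠ e
        have h3 : (t + (m : ZMod (m+1))).val = m := by
          have := ZMod.val_lt (t + (m : ZMod (m+1)))
          omega
        have := hgeq _ h3
        have h4 := hglt t h
        rw [this]
        exact h4
    · -- t.val = m: g t = e, and (t+m).val < m so g(t+m) ≠ e
      have h3 : (t + (m : ZMod (m+1))).val ≠ m := by
        intro hv
        have he1 : t + 1 = 0 := hlastz t h
        have he2 : t + (m : ZMod (m+1)) + 1 = 0 := hlastz _ hv
        have : t + (m : ZMod (m+1)) = t := by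
          have := he2.trans he1.symm
          exact add_right_cancel this
        exact hkne m hm le_rfl this
      have h4 : (t + (m : ZMod (m+1))).val < m := by
        have := ZMod.val_lt (t + (m : ZMod (m+1)))
        omega
      rw [hgeq t h]
      exact fun hEq => hglt _ h4 hEq.symm
  -- conclude: cost at position q is at least 2
  have hq2 := hL q
  have hLq : L q = x := by rw [hq, Equiv.apply_symm_apply]
  have hcost : 2 ≤ G.cost L q := by
    show 2 ≤ G.cut (G.comp (G.tail L q) (L q))
    rw [hLq]
    have hnt : Nontrivial {f : G.E // ∃ a2 b2, G.ends f = s(a2, b2) ∧ a2 ∈ C ∧ b2 ∉ C} :=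
      ⟨⟨⟨g t, hcut1⟩, ⟨g (t + (m : ZMod (m+1))), hcut2⟩, fun hc => hne_g (congrArg Subtype.val hc)⟩⟩
    exact Finite.one_lt_card_iff_nontrivial.mpr hnt
  omega

end EtwAux

/-- A graph `G` has edge-treewidth at most 1 if and only if `G` is a forest. -/
theorem etw_le_one_iff_isForest (G : FinMGraph) : G.etw ≤ 1 ↔ G.IsForest := by
  constructor
  · intro h
    have hS : Set.Nonempty {k | ∃ L : Fin (Fintype.card G.V) ≃ G.V, ∀ i, G.cost L i ≤ k} := by
      refine ⟨Finset.univ.sup (G.cost (Fintype.equivFin G.V).symm),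
        (Fintype.equivFin G.V).symm, ?_⟩
      intro i
      exact Finset.le_sup (Finset.mem_univ i)
    obtain ⟨L, hLl⟩ := Nat.sInf_mem hS
    exact EtwAux.isForest_of_layout (fun i => le_trans (hLl i) h)
  · intro hF
    obtain ⟨L, hLl⟩ := EtwAux.forest_layout hF
    exact Nat.sInf_le ⟨L, hLl⟩
end

section
/- A graph G has edge-treewidth at most 2 if and only if G is a cactus graph (every edge of G belongs to at most one cycle). -/
open Classical

namespace FinMGraph

variable {G : FinMGraph}

lemma stepIn_symm {S : Set G.V} {a b : G.V} (h : G.stepIn S a b) : G.stepIn S b a := by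
  obtain ⟨ha, hb, e, he⟩ := h
  exact ⟨hb, ha, e, he.trans (Sym2.eq_swap)⟩

lemma mem_comp_self (S : Set G.V) (v : G.V) : v ∈ G.comp S v :=
  Relation.ReflTransGen.refl

lemma comp_closed {S : Set G.V} {v u w : G.V} (hu : u ∈ G.comp S v)
    (h : G.stepIn S u w) : w ∈ G.comp S v :=
  Relation.ReflTransGen.tail hu h

lemma mem_comp_subset {S : Set G.V} {v w : G.V} (hv : v ∈ S) (hw : w ∈ G.comp S v) : w ∈ S := by
  induction hw with
  | refl => exact hv
  | tail _ h _ => exact h.2.1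

lemma mem_comp_cases {S : Set G.V} {v w : G.V} (hw : w ∈ G.comp S v) : w = v ∨ w ∈ S := by
  induction hw with
  | refl => exact Or.inl rfl
  | tail _ h _ => exact Or.inr h.2.1

lemma comp_symm {S : Set G.V} {v w : G.V} (h : w ∈ G.comp S v) : v ∈ G.comp S w :=
  haveI : Std.Symm (G.stepIn S) := ⟨fun _ _ => stepIn_symm⟩
  Std.Symm.symm _ _ h

lemma comp_eq_of_mem {S : Set G.V} {v w : G.V} (h : w ∈ G.comp S v) :
    G.comp S w = G.comp S v := by
  ext u
  constructor
  · exact fun hu => Relation.ReflTransGen.trans h hu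
  · exact fun hu => Relation.ReflTransGen.trans (comp_symm h) hu

lemma comp_mono {S S' : Set G.V} (hS : S' ⊆ S) (v : G.V) : G.comp S' v ⊆ G.comp S v := by
  intro w hw
  refine Relation.ReflTransGen.mono ?_ _ _ hw
  rintro a b ⟨ha, hb, he⟩
  exact ⟨hS ha, hS hb, he⟩

lemma comp_erase_eq {S : Set G.V} {x v : G.V} (hx : x ∉ G.comp S v) :
    G.comp (S \ {x}) v = G.comp S v := by
  apply Set.Subset.antisymm (comp_mono Set.diff_subset v)
  intro w hw
  induction hw with
  | refl => exact mem_comp_self _ _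
  | @tail b c hb hbc ih =>
      refine comp_closed ih ?_
      obtain ⟨h1, h2, e, he⟩ := hbc
      have hbv : b ∈ G.comp S v := comp_mono Set.diff_subset v ih
      have hcv : c ∈ G.comp S v := comp_closed hbv ⟨h1, h2, e, he⟩
      exact ⟨⟨h1, fun h => hx (h ▸ hbv)⟩, ⟨h2, fun h => hx (h ▸ hcv)⟩, e, he⟩

/-- The set of cut edges of a vertex set `X`. -/
def cutE (G : FinMGraph) (X : Set G.V) : Set G.E :=
  {e | ∃ a b, G.ends e = s(a, b) ∧ a ∈ X ∧ b ∉ X}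

lemma cut_eq_ncard (X : Set G.V) : G.cut X = (G.cutE X).ncard := by
  rw [← Nat.card_coe_set_eq]
  rfl

end FinMGraph
namespace FinMGraph

variable {G : FinMGraph}

lemma zmod_val_add_one {k : ℕ} [NeZero k] (i : ZMod k) :
    (i + 1).val = if i.val + 1 = k then 0 else i.val + 1 := by
  have hi : ((i.val : ℕ) : ZMod k) = i := by simp [ZMod.natCast_val, ZMod.cast_id]
  have h1 : i + 1 = ((i.val + 1 : ℕ) : ZMod k) := by push_cast [hi]; ring
  by_cases hc : i.val + 1 = k
  · rw [if_pos hc, h1, hc, ZMod.natCast_self, ZMod.val_zero]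
  · rw [if_neg hc, h1, ZMod.val_cast_of_lt]
    exact lt_of_le_of_ne (ZMod.val_lt i) hc

/-- Crossing lemma: a walk leaving `X` crosses the boundary. -/
lemma exists_exit {X : Set G.V} {w : ℕ → G.V} {n : ℕ} (h0 : w 0 ∈ X) (hn : w n ∉ X) :
    ∃ t < n, w t ∈ X ∧ w (t + 1) ∉ X := by
  classical
  have hex : ∃ t, w t ∉ X := ⟨n, hn⟩
  set t0 := Nat.find hex with ht0
  have hspec : w t0 ∉ X := Nat.find_spec hex
  have h1 : 1 ≤ t0 := by
    rcases Nat.eq_zero_or_pos t0 with h | h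
    · exact absurd (h ▸ hspec) (by simpa using h0)
    · exact h
  have hle : t0 ≤ n := Nat.find_min' hex hn
  refine ⟨t0 - 1, by omega, ?_, ?_⟩
  · by_contra hc
    exact absurd (Nat.find_min' hex hc) (by omega)
  · have : t0 - 1 + 1 = t0 := by omega
    rw [this]; exact hspec

lemma exists_enter {X : Set G.V} {w : ℕ → G.V} {n : ℕ} (h0 : w 0 ∉ X) (hn : w n ∈ X) :
    ∃ t < n, w t ∉ X ∧ w (t + 1) ∈ X := by
  have := exists_exit (X := Xᶜ) (w := w) (n := n) h0 (by simpa using hn)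
  simpa using this

/-- From reachability, a walk. -/
lemma exists_walk_of_rtg {S : Set G.V} {u u' : G.V} (e0 : G.E)
    (h : Relation.ReflTransGen (G.stepIn S) u u') :
    ∃ (r : ℕ) (w : ℕ → G.V) (g : ℕ → G.E), w 0 = u ∧ w r = u' ∧
      ∀ t < r, G.stepIn S (w t) (w (t + 1)) ∧ G.ends (g t) = s(w t, w (t + 1)) := by
  induction h with
  | refl => exact ⟨0, fun _ => u, fun _ => e0, rfl, rfl, fun t ht => absurd ht (by omega)⟩
  | @tail b c hb hbc ih =>
      obtain ⟨r, w, g, hw0, hwr, hstep⟩ := ih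
      obtain ⟨hbS, hcS, e, he⟩ := hbc
      set w' : ℕ → G.V := fun t => if t ≤ r then w t else c with hw'
      set g' : ℕ → G.E := fun t => if t < r then g t else e with hg'
      have hw'eq : ∀ t, t ≤ r → w' t = w t := fun t ht => by simp only [hw', if_pos ht]
      have hw'r1 : w' (r + 1) = c := by simp only [hw']; rw [if_neg (by omega)]
      refine ⟨r + 1, w', g', by rw [hw'eq 0 (by omega), hw0], hw'r1, ?_⟩
      intro t ht
      rcases lt_or_ge t r with h' | h'
      · rw [hw'eq t (by omega), hw'eq (t+1) (by omega)]
        have hg'eq : g' t = g t := by simp only [hg', if_pos h']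
        rw [hg'eq]
        exact hstep t h'
      · have ht' : t = r := by omega
        subst ht'
        rw [hw'eq t (le_refl t), hw'r1]
        have hg'eq : g' t = e := by simp only [hg']; rw [if_neg (by omega)]
        rw [hg'eq, hwr]
        exact ⟨⟨hbS, hcS, e, he⟩, he⟩

/-- Loop-erasure: from a walk, an injective walk with the same endpoints. -/
lemma exists_inj_walk {S : Set G.V} {u u' : G.V} (e0 : G.E)
    (h : Relation.ReflTransGen (G.stepIn S) u u') :
    ∃ (r : ℕ) (w : ℕ → G.V) (g : ℕ → G.E), w 0 = u ∧ w r = u' ∧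
      (∀ s ≤ r, ∀ t ≤ r, w s = w t → s = t) ∧
      ∀ t < r, G.stepIn S (w t) (w (t + 1)) ∧ G.ends (g t) = s(w t, w (t + 1)) := by
  obtain ⟨r, w, g, hw0, hwr, hstep⟩ := exists_walk_of_rtg e0 h
  clear h
  induction r using Nat.strong_induction_on generalizing w g with
  | _ r ih =>
    by_cases hdup : ∃ s t, s < t ∧ t ≤ r ∧ w s = w t
    · obtain ⟨s, t, hst, htr, hw⟩ := hdup
      set d := t - s with hd
      have hd1 : 1 ≤ d := by omega
      set r' := r - d with hr'
      have hr'lt : r' < r := by omega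
      set w' : ℕ → G.V := fun i => if i ≤ s then w i else w (i + d) with hw'def
      set g' : ℕ → G.E := fun i => if i < s then g i else g (i + d) with hg'def
      have hkey : ∀ i, s ≤ i → w' i = w (i + d) := by
        intro i hi
        by_cases h' : i ≤ s
        · have : i = s := by omega
          subst this
          simp only [hw'def, if_pos h']
          have h2 : i + d = t := by omega
          rw [h2, hw]
        · simp only [hw'def, if_neg h']
      have hlo : ∀ i, i ≤ s → w' i = w i := fun i hi => by simp only [hw'def, if_pos hi]
      refine ih r' hr'lt w' g' (by rw [hlo 0 (by omega), hw0]) ?_ ?_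
      · by_cases h' : r' ≤ s
        · have ht' : t = r := by omega
          have hr's : r' = s := by omega
          rw [hlo r' h', hr's, hw, ht', hwr]
        · rw [hkey r' (by omega)]
          have h2 : r' + d = r := by omega
          rw [h2, hwr]
      · intro i hi
        by_cases h' : i < s
        · rw [hlo i (by omega), hlo (i+1) (by omega)]
          have hg'eq : g' i = g i := by simp only [hg'def, if_pos h']
          rw [hg'eq]
          exact hstep i (by omega)
        · rw [hkey i (by omega), hkey (i+1) (by omega)]
          have hg'eq : g' i = g (i + d) := by simp only [hg'def, if_neg h']
          rw [hg'eq]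
          have h2 : i + 1 + d = i + d + 1 := by omega
          rw [h2]
          exact hstep (i + d) (by omega)
    · push_neg at hdup
      refine ⟨r, w, g, hw0, hwr, ?_, hstep⟩
      intro s hs t ht hwst
      rcases lt_trichotomy s t with h' | h' | h'
      · exact absurd hwst (hdup s t h' ht)
      · exact h'
      · exact absurd hwst.symm (hdup t s h' hs)

lemma walk_mem_comp {S : Set G.V} {u : G.V} {w : ℕ → G.V} {r : ℕ} (hw0 : w 0 = u)
    (hstep : ∀ t < r, G.stepIn S (w t) (w (t + 1))) :
    ∀ t ≤ r, w t ∈ G.comp S u := by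
  intro t
  induction t with
  | zero => intro _; rw [hw0]; exact mem_comp_self _ _
  | succ t iht =>
      intro ht
      exact comp_closed (iht (by omega)) (hstep t (by omega))

end FinMGraph
namespace FinMGraph

variable {G : FinMGraph}

/-- Build a cycle from an injective path `w 0, …, w r` avoiding `a`, plus two
distinct edges `h1 : a — w 0` and `h2 : w r — a`. -/
lemma exists_cycle_of_path {r : ℕ} {w : ℕ → G.V} {g : ℕ → G.E} {a : G.V} {h1 h2 : G.E}
    (hinj : ∀ s ≤ r, ∀ t ≤ r, w s = w t → s = t)
    (hna : ∀ t ≤ r, w t ≠ a)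
    (hends : ∀ t < r, G.ends (g t) = s(w t, w (t + 1)))
    (hh1 : G.ends h1 = s(a, w 0)) (hh2 : G.ends h2 = s(w r, a)) (hne : h1 ≠ h2) :
    ∃ (k : ℕ) (v : ZMod k → G.V) (f : ZMod k → G.E),
      G.IsCycleOn k v f ∧ (∃ i0, v i0 = a) ∧
      h1 ∈ Set.range f ∧ h2 ∈ Set.range f ∧
      (∀ e ∈ Set.range f, e = h1 ∨ e = h2 ∨ ∃ t < r, e = g t) ∧
      (∀ i, v i = a ∨ ∃ t ≤ r, v i = w t) ∧
      (∀ t < r, g t ∈ Set.range f) := by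
  haveI : NeZero (r + 2) := ⟨by omega⟩
  set k := r + 2 with hk
  set v : ZMod k → G.V := fun i => if i.val = 0 then a else w (i.val - 1) with hv
  set f : ZMod k → G.E := fun i =>
    if i.val = 0 then h1 else if i.val = r + 1 then h2 else g (i.val - 1) with hf
  have hvlt : ∀ i : ZMod k, i.val < k := fun i => ZMod.val_lt i
  -- ends condition
  have hcyc : ∀ i : ZMod k, G.ends (f i) = s(v i, v (i + 1)) := by
    intro i
    have hadd := zmod_val_add_one i
    by_cases h0 : i.val = 0
    · have h1' : (i + 1).val = 1 := by rw [hadd, h0]; simp; omega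
      simp only [hv, hf, h0, if_pos rfl, h1']
      norm_num
      exact hh1
    · by_cases hlast : i.val = r + 1
      · have h1' : (i + 1).val = 0 := by rw [hadd, hlast]; simp [hk]
        simp only [hv, hf, h0, if_neg h0, hlast, if_pos rfl, h1', if_pos rfl]
        rw [show r + 1 - 1 = r by omega]
        exact hh2
      · have hi1 : i.val - 1 < r := by have := hvlt i; omega
        have h1' : (i + 1).val = i.val + 1 := by
          rw [hadd, if_neg (by omega)]
        have h10 : ¬ (i + 1).val = 0 := by omega
        simp only [hv, hf, if_neg h0, if_neg hlast, if_neg h10, h1']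
        rw [show i.val + 1 - 1 = i.val - 1 + 1 by omega]
        exact hends _ hi1
  have hvinj : Function.Injective v := by
    intro i j hij
    simp only [hv] at hij
    by_cases h0 : i.val = 0 <;> by_cases h0' : j.val = 0
    · exact ZMod.val_injective k (h0.trans h0'.symm)
    · rw [if_pos h0, if_neg h0'] at hij
      exact absurd hij.symm (hna _ (by have := hvlt j; omega))
    · rw [if_neg h0, if_pos h0'] at hij
      exact absurd hij (hna _ (by have := hvlt i; omega))
    · rw [if_neg h0, if_neg h0'] at hij
      have := hinj _ (by have := hvlt i; omega) _ (by have := hvlt j; omega) hij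
      exact ZMod.val_injective k (by omega)
  have hfinj : Function.Injective f := by
    intro i j hij
    have he := (hcyc i).symm.trans ((congrArg G.ends hij).trans (hcyc j))
    rw [Sym2.eq_iff] at he
    rcases he with ⟨ha1, _⟩ | ⟨ha1, ha2⟩
    · exact hvinj ha1
    · have h1' : i = j + 1 := hvinj ha1
      have h2' : i + 1 = j := hvinj ha2
      have h2eq : (2 : ZMod k) = 0 := by
        have : i = i + 1 + 1 := by rw [h2', h1']
        have h3 : (0 : ZMod k) = 2 := by linear_combination this
        exact h3.symm
      have hdvd : k ∣ 2 := by
        have : ((2 : ℕ) : ZMod k) = 0 := by exact_mod_cast h2eq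
        exact (ZMod.natCast_eq_zero_iff 2 k).mp this
      have hr0 : r = 0 := by
        have := Nat.le_of_dvd (by omega) hdvd
        omega
      -- k = 2 : i = j + 1 ≠ j, edges are h1 and h2
      subst hr0
      exfalso
      have hij' : i ≠ j := by
        intro hc
        rw [hc] at h1'
        have : (1 : ZMod k) = 0 := by linear_combination h1'.symm
        have : ((1:ℕ) : ZMod k) = 0 := by exact_mod_cast this
        have h4 := (ZMod.natCast_eq_zero_iff 1 k).mp this
        rw [hk] at h4
        omega
      have hval : (i.val = 0 ∧ j.val = 1) ∨ (i.val = 1 ∧ j.val = 0) := by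
        have hi := hvlt i; have hj := hvlt j
        have hk2 : k = 2 := by rw [hk]
        have : i.val ≠ j.val := fun hc => hij' (ZMod.val_injective k hc)
        omega
      rcases hval with ⟨hi0, hj0⟩ | ⟨hi0, hj0⟩
      · simp only [hf, if_pos hi0, if_neg (by omega : ¬ j.val = 0), if_pos hj0] at hij
        exact hne hij
      · simp only [hf, if_neg (by omega : ¬ i.val = 0), if_pos hi0, if_pos hj0] at hij
        exact hne hij.symm
  refine ⟨k, v, f, ⟨by simp [hk], hvinj, hfinj, hcyc⟩, ⟨0, by simp [hv, ZMod.val_zero]⟩, ?_, ?_, ?_, ?_, ?_⟩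
  · refine ⟨0, ?_⟩
    simp [hf, ZMod.val_zero]
  · refine ⟨((r + 1 : ℕ) : ZMod k), ?_⟩
    have hval : ((r + 1 : ℕ) : ZMod k).val = r + 1 := ZMod.val_cast_of_lt (by omega)
    simp only [hf, hval]
    simp
  · rintro e ⟨i, rfl⟩
    by_cases h0 : i.val = 0
    · left; simp only [hf]; rw [if_pos h0]
    · by_cases hlast : i.val = r + 1
      · right; left; simp only [hf, if_neg h0, if_pos hlast]
      · right; right
        refine ⟨i.val - 1, by have := hvlt i; omega, ?_⟩
        simp only [hf, if_neg h0, if_neg hlast]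
  · intro i
    by_cases h0 : i.val = 0
    · left; simp only [hv]; rw [if_pos h0]
    · right
      refine ⟨i.val - 1, by have := hvlt i; omega, ?_⟩
      simp only [hv, if_neg h0]
  · intro t ht
    refine ⟨((t + 1 : ℕ) : ZMod k), ?_⟩
    have hval : ((t + 1 : ℕ) : ZMod k).val = t + 1 := ZMod.val_cast_of_lt (by omega)
    simp only [hf, hval]
    rw [if_neg (by omega), if_neg (by omega), show t + 1 - 1 = t from rfl]

/-- In a cycle, an edge incident with the vertex `v i0` has index `i0` or `i0 - 1`. -/
lemma cycle_edge_at_vertex {k : ℕ} {v : ZMod k → G.V} {f : ZMod k → G.E}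
    (hC : G.IsCycleOn k v f) {i0 j : ZMod k} (hj : v i0 ∈ G.ends (f j)) :
    j = i0 ∨ j + 1 = i0 := by
  obtain ⟨hk, hvinj, hfinj, hcyc⟩ := hC
  rw [hcyc j, Sym2.mem_iff] at hj
  rcases hj with h | h
  · exact Or.inl (hvinj h.symm)
  · exact Or.inr (hvinj h.symm)

/-- A vertex of a cycle is incident with at most two of its edges. -/
lemma cycle_three_edges_at_vertex {k : ℕ} {v : ZMod k → G.V} {f : ZMod k → G.E}
    (hC : G.IsCycleOn k v f) {i0 : ZMod k} {e1 e2 e3 : G.E}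
    (he1 : e1 ∈ Set.range f) (he2 : e2 ∈ Set.range f) (he3 : e3 ∈ Set.range f)
    (h12 : e1 ≠ e2) (h13 : e1 ≠ e3) (h23 : e2 ≠ e3)
    (hm1 : v i0 ∈ G.ends e1) (hm2 : v i0 ∈ G.ends e2) (hm3 : v i0 ∈ G.ends e3) : False := by
  obtain ⟨j1, rfl⟩ := he1
  obtain ⟨j2, rfl⟩ := he2
  obtain ⟨j3, rfl⟩ := he3
  have hj1 := cycle_edge_at_vertex hC hm1
  have hj2 := cycle_edge_at_vertex hC hm2
  have hj3 := cycle_edge_at_vertex hC hm3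
  have hne12 : j1 ≠ j2 := fun hc => h12 (congrArg f hc)
  have hne13 : j1 ≠ j3 := fun hc => h13 (congrArg f hc)
  have hne23 : j2 ≠ j3 := fun hc => h23 (congrArg f hc)
  have key : ∀ x : ZMod k, (x = i0 ∨ x + 1 = i0) → x = i0 ∨ x = i0 - 1 := by
    rintro x (h | h)
    · exact Or.inl h
    · right; linear_combination h
  rcases key _ hj1 with h1 | h1 <;> rcases key _ hj2 with h2 | h2 <;>
    rcases key _ hj3 with h3 | h3 <;>
    first
      | exact hne12 (h1.trans h2.symm)
      | exact hne13 (h1.trans h3.symm)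
      | exact hne23 (h2.trans h3.symm)

end FinMGraph
namespace FinMGraph

variable {G : FinMGraph}

/-- Walk data from `p` to `q` with `n` edges. -/
def WalkData (G : FinMGraph) (p q : G.V) (n : ℕ) (w : ℕ → G.V) (g : ℕ → G.E) : Prop :=
  w 0 = p ∧ w n = q ∧ ∀ t < n, G.ends (g t) = s(w t, w (t + 1))

lemma WalkData.reverse {p q : G.V} {n : ℕ} {w : ℕ → G.V} {g : ℕ → G.E}
    (h : G.WalkData p q n w g) :
    G.WalkData q p n (fun t => w (n - t)) (fun t => g (n - 1 - t)) := by
  obtain ⟨h0, hn, hg⟩ := h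
  refine ⟨by simp [hn], by simp [h0], ?_⟩
  intro t ht
  have h1 : n - 1 - t < n := by omega
  have h2 : n - 1 - t + 1 = n - t := by omega
  have h3 : n - (t + 1) = n - 1 - t := by omega
  show G.ends (g (n - 1 - t)) = s(w (n - t), w (n - (t+1)))
  rw [hg _ h1, h2, h3]
  exact Sym2.eq_swap

lemma cut_ge_three_of_walks {p q : G.V} {X : Set G.V} (hp : p ∉ X) (hq : q ∈ X)
    {n1 n2 n3 : ℕ} {w1 w2 w3 : ℕ → G.V} {g1 g2 g3 : ℕ → G.E}
    (h1 : G.WalkData p q n1 w1 g1) (h2 : G.WalkData p q n2 w2 g2)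
    (h3 : G.WalkData p q n3 w3 g3)
    (d12 : ∀ t < n1, ∀ t' < n2, g1 t ≠ g2 t')
    (d13 : ∀ t < n1, ∀ t' < n3, g1 t ≠ g3 t')
    (d23 : ∀ t < n2, ∀ t' < n3, g2 t ≠ g3 t') :
    3 ≤ G.cut X := by
  obtain ⟨h10, h1n, h1g⟩ := h1
  obtain ⟨h20, h2n, h2g⟩ := h2
  obtain ⟨h30, h3n, h3g⟩ := h3
  obtain ⟨t1, ht1, ht1n, ht1m⟩ := exists_enter (h10 ▸ hp) (h1n ▸ hq)
  obtain ⟨t2, ht2, ht2n, ht2m⟩ := exists_enter (h20 ▸ hp) (h2n ▸ hq)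
  obtain ⟨t3, ht3, ht3n, ht3m⟩ := exists_enter (h30 ▸ hp) (h3n ▸ hq)
  have m1 : g1 t1 ∈ G.cutE X := ⟨w1 (t1 + 1), w1 t1, (h1g t1 ht1).trans Sym2.eq_swap, ht1m, ht1n⟩
  have m2 : g2 t2 ∈ G.cutE X := ⟨w2 (t2 + 1), w2 t2, (h2g t2 ht2).trans Sym2.eq_swap, ht2m, ht2n⟩
  have m3 : g3 t3 ∈ G.cutE X := ⟨w3 (t3 + 1), w3 t3, (h3g t3 ht3).trans Sym2.eq_swap, ht3m, ht3n⟩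
  rw [cut_eq_ncard]
  have hsub : ({g1 t1, g2 t2, g3 t3} : Set G.E) ⊆ G.cutE X := by
    intro e he
    rcases he with rfl | rfl | rfl
    · exact m1
    · exact m2
    · exact m3
  have h3card : ({g1 t1, g2 t2, g3 t3} : Set G.E).ncard = 3 :=
    Set.ncard_eq_three.mpr ⟨_, _, _, d12 t1 ht1 t2 ht2, d13 t1 ht1 t3 ht3, d23 t2 ht2 t3 ht3, rfl⟩
  calc 3 = ({g1 t1, g2 t2, g3 t3} : Set G.E).ncard := h3card.symm
    _ ≤ (G.cutE X).ncard := Set.ncard_le_ncard hsub (Set.toFinite _)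

lemma comp_tail_subset (L : Fin (Fintype.card G.V) ≃ G.V) (i : Fin (Fintype.card G.V)) :
    G.comp (G.tail L i) (L i) ⊆ G.tail L i := by
  have : L i ∈ G.tail L i := by
    show i ≤ L.symm (L i)
    simp
  exact fun w hw => mem_comp_subset this hw

lemma cost_ge_three_of_three_walks {p q : G.V} (hpq : p ≠ q)
    {n1 n2 n3 : ℕ} {w1 w2 w3 : ℕ → G.V} {g1 g2 g3 : ℕ → G.E}
    (h1 : G.WalkData p q n1 w1 g1) (h2 : G.WalkData p q n2 w2 g2)
    (h3 : G.WalkData p q n3 w3 g3)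
    (d12 : ∀ t < n1, ∀ t' < n2, g1 t ≠ g2 t')
    (d13 : ∀ t < n1, ∀ t' < n3, g1 t ≠ g3 t')
    (d23 : ∀ t < n2, ∀ t' < n3, g2 t ≠ g3 t')
    (L : Fin (Fintype.card G.V) ≃ G.V) : ∃ i, 3 ≤ G.cost L i := by
  rcases lt_or_ge (L.symm p) (L.symm q) with hlt | hge
  · refine ⟨L.symm q, ?_⟩
    set i := L.symm q with hi
    set X := G.comp (G.tail L i) (L i) with hX
    have hqX : q ∈ X := by
      have : L i = q := by rw [hi]; simp
      rw [hX, this]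
      exact mem_comp_self _ _
    have hpX : p ∉ X := by
      intro hc
      have := comp_tail_subset L i hc
      have h2 : i ≤ L.symm p := this
      omega
    exact cut_ge_three_of_walks hpX hqX h1 h2 h3 d12 d13 d23
  · have hne : L.symm q ≠ L.symm p := fun hc => hpq (by
      have := congrArg L hc
      simpa using this.symm)
    have hlt : L.symm q < L.symm p := lt_of_le_of_ne hge hne
    refine ⟨L.symm p, ?_⟩
    set i := L.symm p with hi
    set X := G.comp (G.tail L i) (L i) with hX
    have hqX : p ∈ X := by
      have : L i = p := by rw [hi]; simp
      rw [hX, this]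
      exact mem_comp_self _ _
    have hpX : q ∉ X := by
      intro hc
      have := comp_tail_subset L i hc
      have h2 : i ≤ L.symm q := this
      omega
    exact cut_ge_three_of_walks hpX hqX h1.reverse h2.reverse h3.reverse
      (fun t ht t' ht' => d12 _ (by omega) _ (by omega))
      (fun t ht t' ht' => d13 _ (by omega) _ (by omega))
      (fun t ht t' ht' => d23 _ (by omega) _ (by omega))

end FinMGraph
namespace FinMGraph

variable {G : FinMGraph}

lemma zmod_cast_val {n : ℕ} [NeZero n] (x : ZMod n) : ((x.val : ℕ) : ZMod n) = x := by
  simp [ZMod.natCast_val, ZMod.cast_id]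

lemma zmod_val_pos {n : ℕ} [NeZero n] {x : ZMod n} (hx : x ≠ 0) : 1 ≤ x.val := by
  rcases Nat.eq_zero_or_pos x.val with h | h
  · exact absurd ((ZMod.val_eq_zero x).mp h) hx
  · exact h

lemma zmod_val_add_val_neg {n : ℕ} [NeZero n] {u : ZMod n} (hu : u ≠ 0) :
    u.val + (-u).val = n := by
  have h1 : 1 ≤ u.val := zmod_val_pos hu
  have h2 : u.val < n := ZMod.val_lt u
  have h3 : -u = ((n - u.val : ℕ) : ZMod n) := by
    have : ((n - u.val : ℕ) : ZMod n) = (n : ℕ) - (u.val : ℕ) := by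
      push_cast [Nat.cast_sub (le_of_lt h2)]
      ring
    rw [this, ZMod.natCast_self, zmod_cast_val]
    ring
  rw [h3, ZMod.val_cast_of_lt (by omega)]
  omega

lemma zmod_eq_zero_of_cast {n : ℕ} (a : ℕ) (h : ((a : ℕ) : ZMod n) = 0) : n ∣ a :=
  (ZMod.natCast_eq_zero_iff a n).mp h

/-- From two cycles sharing an edge, with an edge of the second not on the first,
extract three pairwise edge-disjoint walks between two distinct vertices. -/
lemma exists_three_walks {k1 k2 : ℕ} {v1 : ZMod k1 → G.V} {f1 : ZMod k1 → G.E}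
    {v2 : ZMod k2 → G.V} {f2 : ZMod k2 → G.E}
    (hC1 : G.IsCycleOn k1 v1 f1) (hC2 : G.IsCycleOn k2 v2 f2)
    (hshare : ∃ e, e ∈ Set.range f1 ∧ e ∈ Set.range f2)
    (hdiff : ∃ j, f2 j ∉ Set.range f1) :
    ∃ (p q : G.V), p ≠ q ∧
    ∃ (n1 n2 n3 : ℕ) (w1 w2 w3 : ℕ → G.V) (g1 g2 g3 : ℕ → G.E),
      G.WalkData p q n1 w1 g1 ∧ G.WalkData p q n2 w2 g2 ∧ G.WalkData p q n3 w3 g3 ∧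
      (∀ t < n1, ∀ t' < n2, g1 t ≠ g2 t') ∧
      (∀ t < n1, ∀ t' < n3, g1 t ≠ g3 t') ∧
      (∀ t < n2, ∀ t' < n3, g2 t ≠ g3 t') := by
  obtain ⟨hk1, hv1inj, hf1inj, hcyc1⟩ := hC1
  obtain ⟨hk2, hv2inj, hf2inj, hcyc2⟩ := hC2
  haveI : NeZero k1 := ⟨by omega⟩
  haveI : NeZero k2 := ⟨by omega⟩
  obtain ⟨e, ⟨i1, hei1⟩, ⟨i2, hei2⟩⟩ := hshare
  obtain ⟨j, hj⟩ := hdiff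
  -- both endpoints of the shared edge are on cycle 1
  have hends : s(v1 i1, v1 (i1 + 1)) = s(v2 i2, v2 (i2 + 1)) := by
    rw [← hcyc1 i1, ← hcyc2 i2, hei1, hei2]
  have hva : v2 i2 ∈ Set.range v1 := by
    rw [Sym2.eq_iff] at hends
    rcases hends with ⟨ha, _⟩ | ⟨_, hb⟩
    · exact ⟨i1, ha⟩
    · exact ⟨i1 + 1, hb⟩
  have hvb : v2 (i2 + 1) ∈ Set.range v1 := by
    rw [Sym2.eq_iff] at hends
    rcases hends with ⟨_, hb⟩ | ⟨ha, _⟩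
    · exact ⟨i1 + 1, hb⟩
    · exact ⟨i1, ha⟩
  have hji2 : j ≠ i2 := by
    rintro rfl
    exact hj (hei2 ▸ ⟨i1, hei1⟩)
  set u : ZMod k2 := i2 - j with hu
  have hu0 : u ≠ 0 := by
    rw [hu, sub_ne_zero]
    exact fun hc => hji2 hc.symm
  set t2 := u.val with ht2
  have ht2pos : 1 ≤ t2 := zmod_val_pos hu0
  have ht2lt : t2 < k2 := ZMod.val_lt u
  set s0 := k2 - 1 - t2 with hs0
  have hcast_t2 : ((t2 : ℕ) : ZMod k2) = u := zmod_cast_val u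
  have hcast_s0 : ((s0 : ℕ) : ZMod k2) = -1 - u := by
    have h1 : (s0 : ℕ) = k2 - (1 + t2) := by omega
    rw [h1]
    push_cast [Nat.cast_sub (by omega : 1 + t2 ≤ k2)]
    rw [ZMod.natCast_self, hcast_t2]
    ring
  -- first hit forward
  have hAne : ∃ t, 1 ≤ t ∧ t ≤ k2 ∧ v2 (j + (t : ℕ)) ∈ Set.range v1 := by
    refine ⟨t2, ht2pos, by omega, ?_⟩
    rw [hcast_t2]
    have : j + u = i2 := by rw [hu]; ring
    rw [this]
    exact hva
  set α := Nat.find hAne with hα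
  obtain ⟨hα1, hα2, hqr⟩ := Nat.find_spec hAne
  have hαle : α ≤ t2 := Nat.find_min' hAne ⟨ht2pos, by omega, by
    rw [hcast_t2]
    have : j + u = i2 := by rw [hu]; ring
    rw [this]
    exact hva⟩
  have hαmin : ∀ t, 1 ≤ t → t < α → v2 (j + (t : ℕ)) ∉ Set.range v1 := by
    intro t h1 h2 hc
    exact Nat.find_min hAne h2 ⟨h1, by omega, hc⟩
  -- first hit backward
  have hBne : ∃ s, s ≤ k2 - 1 ∧ v2 (j - (s : ℕ)) ∈ Set.range v1 := by
    refine ⟨s0, by omega, ?_⟩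
    rw [hcast_s0]
    have : j - (-1 - u) = i2 + 1 := by rw [hu]; ring
    rw [this]
    exact hvb
  set β := Nat.find hBne with hβ
  obtain ⟨hβ1, hpr⟩ := Nat.find_spec hBne
  have hβle : β ≤ s0 := Nat.find_min' hBne ⟨by omega, by
    rw [hcast_s0]
    have : j - (-1 - u) = i2 + 1 := by rw [hu]; ring
    rw [this]
    exact hvb⟩
  have hβmin : ∀ s, s < β → v2 (j - (s : ℕ)) ∉ Set.range v1 := by
    intro s h2 hc
    exact Nat.find_min hBne h2 ⟨by omega, hc⟩
  have hαβ : α + β ≤ k2 - 1 := by omega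
  set p := v2 (j - (β : ℕ)) with hp
  set q := v2 (j + (α : ℕ)) with hq
  have hpq : p ≠ q := by
    rw [hp, hq]
    intro hc
    have h1 : j - (β : ℕ) = j + (α : ℕ) := hv2inj hc
    have h2 : (((α + β : ℕ) : ℕ) : ZMod k2) = 0 := by
      push_cast
      linear_combination - h1
    have := zmod_eq_zero_of_cast _ h2
    have := Nat.le_of_dvd (by omega) this
    omega
  -- the ear avoids the edges of cycle 1
  have hear : ∀ t < β + α, f2 (j - (β : ℕ) + (t : ℕ)) ∉ Set.range f1 := by
    intro t ht hc
    obtain ⟨m, hm⟩ := hc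
    have hendsm : s(v1 m, v1 (m + 1)) = s(v2 (j - (β:ℕ) + (t:ℕ)), v2 (j - (β:ℕ) + (t:ℕ) + 1)) := by
      rw [← hcyc1 m, ← hcyc2 _, hm]
    have hmem1 : v2 (j - (β:ℕ) + (t:ℕ)) ∈ Set.range v1 := by
      rw [Sym2.eq_iff] at hendsm
      rcases hendsm with ⟨ha, _⟩ | ⟨_, hb⟩
      · exact ⟨m, ha⟩
      · exact ⟨m + 1, hb⟩
    have hmem2 : v2 (j - (β:ℕ) + (t:ℕ) + 1) ∈ Set.range v1 := by
      rw [Sym2.eq_iff] at hendsm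
      rcases hendsm with ⟨_, hb⟩ | ⟨ha, _⟩
      · exact ⟨m + 1, hb⟩
      · exact ⟨m, ha⟩
    rcases lt_trichotomy t β with h' | h' | h'
    · -- backward part : endpoint j - (β - t - 1)
      apply hβmin (β - t - 1) (by omega)
      have : j - ((β - t - 1 : ℕ) : ZMod k2) = j - (β:ℕ) + (t:ℕ) + 1 := by
        have hnn : (β - t - 1 : ℕ) = β - (t + 1) := by omega
        rw [hnn]
        push_cast [Nat.cast_sub (by omega : t + 1 ≤ β)]
        ring
      rw [this]
      exact hmem2
    · -- t = β : this is the edge f2 j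
      apply hj
      have : j - (β:ℕ) + (t:ℕ) = j := by rw [h']; ring
      rw [← this]
      exact ⟨m, hm⟩
    · -- forward part : endpoint j + (t - β)
      apply hαmin (t - β) (by omega) (by omega)
      have : j + ((t - β : ℕ) : ZMod k2) = j - (β:ℕ) + (t:ℕ) := by
        push_cast [Nat.cast_sub (by omega : β ≤ t)]
        ring
      rw [this]
      exact hmem1
  -- indices of p and q on cycle 1
  obtain ⟨m, hm⟩ := hpr
  obtain ⟨m', hm'⟩ := hqr
  have hmm' : m ≠ m' := by
    intro hc
    exact hpq (by rw [← hm, ← hm', hc])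
  set d := (m' - m).val with hd
  set d' := (m - m').val with hd'
  have hdpos : 1 ≤ d := zmod_val_pos (by rw [sub_ne_zero]; exact fun hc => hmm' hc.symm)
  have hd'pos : 1 ≤ d' := zmod_val_pos (by rw [sub_ne_zero]; exact hmm')
  have hdd' : d + d' = k1 := by
    have := zmod_val_add_val_neg (u := m' - m) (by rw [sub_ne_zero]; exact fun hc => hmm' hc.symm)
    have hneg : -(m' - m) = m - m' := by ring
    rw [hneg] at this
    exact this
  refine ⟨p, q, hpq, d, d', β + α,
    (fun t => v1 (m + (t : ℕ))), (fun t => v1 (m - (t : ℕ))), (fun t => v2 (j - (β:ℕ) + (t:ℕ))),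
    (fun t => f1 (m + (t : ℕ))), (fun t => f1 (m - (t : ℕ) - 1)), (fun t => f2 (j - (β:ℕ) + (t:ℕ))),
    ⟨by simpa using hm, ?_, ?_⟩, ⟨by simpa using hm, ?_, ?_⟩, ⟨?_, ?_, ?_⟩, ?_, ?_, ?_⟩
  · -- w1 d = q
    show v1 (m + ((d : ℕ) : ZMod k1)) = q
    rw [hd, zmod_cast_val]
    have : m + (m' - m) = m' := by ring
    rw [this, hm']
  · -- ends of walk 1
    intro t ht
    show G.ends (f1 (m + (t:ℕ))) = s(v1 (m + (t:ℕ)), v1 (m + ((t+1 : ℕ) : ZMod k1)))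
    rw [hcyc1]
    push_cast
    ring_nf
  · -- w2 d' = q
    show v1 (m - ((d' : ℕ) : ZMod k1)) = q
    rw [hd', zmod_cast_val]
    have : m - (m - m') = m' := by ring
    rw [this, hm']
  · -- ends of walk 2
    intro t ht
    show G.ends (f1 (m - (t:ℕ) - 1)) = s(v1 (m - (t:ℕ)), v1 (m - ((t+1 : ℕ) : ZMod k1)))
    rw [hcyc1]
    have h2 : m - (t:ℕ) - 1 + 1 = m - (t:ℕ) := by ring
    have h3 : m - ((t+1:ℕ) : ZMod k1) = m - (t:ℕ) - 1 := by push_cast; ring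
    rw [h2, h3]
    exact Sym2.eq_swap
  · -- w3 0 = p
    show v2 (j - (β:ℕ) + ((0:ℕ) : ZMod k2)) = p
    simp [hp]
  · -- w3 (β+α) = q
    show v2 (j - (β:ℕ) + ((β + α : ℕ) : ZMod k2)) = q
    have : j - (β:ℕ) + ((β + α : ℕ) : ZMod k2) = j + (α:ℕ) := by push_cast; ring
    rw [this]
  · -- ends of walk 3
    intro t ht
    show G.ends (f2 (j - (β:ℕ) + (t:ℕ))) =
      s(v2 (j - (β:ℕ) + (t:ℕ)), v2 (j - (β:ℕ) + ((t+1:ℕ) : ZMod k2)))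
    rw [hcyc2]
    have : j - (β:ℕ) + ((t+1:ℕ) : ZMod k2) = j - (β:ℕ) + (t:ℕ) + 1 := by push_cast; ring
    rw [this]
  · -- disjointness 1-2
    intro t ht t' ht' hc
    have h1 : m + (t:ℕ) = m - (t':ℕ) - 1 := hf1inj hc
    have h2 : (((t + t' + 1 : ℕ) : ℕ) : ZMod k1) = 0 := by
      push_cast
      linear_combination h1
    have := Nat.le_of_dvd (by omega) (zmod_eq_zero_of_cast _ h2)
    omega
  · -- disjointness 1-3
    intro t ht t' ht' hc
    exact hear t' ht' ⟨m + (t:ℕ), hc⟩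
  · -- disjointness 2-3
    intro t ht t' ht' hc
    exact hear t' ht' ⟨m - (t:ℕ) - 1, hc⟩

end FinMGraph
namespace FinMGraph

variable {G : FinMGraph}

lemma isCactus_of_layout (L : Fin (Fintype.card G.V) ≃ G.V) (hL : ∀ i, G.cost L i ≤ 2) :
    G.IsCactus := by
  intro k1 v1 f1 k2 v2 f2 hC1 hC2 hshare
  by_contra hne
  have hcases : (∃ j, f2 j ∉ Set.range f1) ∨ (∃ j, f1 j ∉ Set.range f2) := by
    by_contra hc
    push_neg at hc
    exact hne (Set.Subset.antisymm
      (by rintro x ⟨j, rfl⟩; exact hc.2 j)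
      (by rintro x ⟨j, rfl⟩; exact hc.1 j))
  have hkey : ∃ (p q : G.V), p ≠ q ∧
      ∃ (n1 n2 n3 : ℕ) (w1 w2 w3 : ℕ → G.V) (g1 g2 g3 : ℕ → G.E),
        G.WalkData p q n1 w1 g1 ∧ G.WalkData p q n2 w2 g2 ∧ G.WalkData p q n3 w3 g3 ∧
        (∀ t < n1, ∀ t' < n2, g1 t ≠ g2 t') ∧
        (∀ t < n1, ∀ t' < n3, g1 t ≠ g3 t') ∧
        (∀ t < n2, ∀ t' < n3, g2 t ≠ g3 t') := by
    rcases hcases with h | h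
    · exact exists_three_walks hC1 hC2 hshare h
    · obtain ⟨e, he1, he2⟩ := hshare
      exact exists_three_walks hC2 hC1 ⟨e, he2, he1⟩ h
  obtain ⟨p, q, hpq, n1, n2, n3, w1, w2, w3, g1, g2, g3, h1, h2, h3, d12, d13, d23⟩ := hkey
  obtain ⟨i, hi⟩ := cost_ge_three_of_three_walks hpq h1 h2 h3 d12 d13 d23 L
  exact absurd (le_trans hi (hL i)) (by omega)

lemma isCactus_of_etw_le_two (h : G.etw ≤ 2) : G.IsCactus := by
  have hne : {k | ∃ L : Fin (Fintype.card G.V) ≃ G.V, ∀ i, G.cost L i ≤ k}.Nonempty := by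
    refine ⟨Fintype.card G.E, (Fintype.equivFin G.V).symm, fun i => ?_⟩
    show Nat.card _ ≤ _
    rw [Nat.card_eq_fintype_card]
    exact Fintype.card_subtype_le _
  obtain ⟨L, hL⟩ := Nat.sInf_mem hne
  exact isCactus_of_layout L (fun i => le_trans (hL i) h)

end FinMGraph
namespace FinMGraph

variable {G : FinMGraph}

/-- No cycle lying inside `S` uses the edge `e`. -/
def noCyc (G : FinMGraph) (S : Set G.V) (e : G.E) : Prop :=
  ¬ ∃ (k : ℕ) (v : ZMod k → G.V) (f : ZMod k → G.E),
      G.IsCycleOn k v f ∧ (∀ i, v i ∈ S) ∧ e ∈ Set.range f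

lemma noCyc.mono {S S' : Set G.V} (h : S' ⊆ S) {e : G.E} (he : G.noCyc S e) :
    G.noCyc S' e := by
  rintro ⟨k, v, f, hC, hv, hef⟩
  exact he ⟨k, v, f, hC, fun i => h (hv i), hef⟩

/-- Edges joining `M` to the vertex `a`. -/
def edgesTo (G : FinMGraph) (M : Set G.V) (a : G.V) : Set G.E :=
  {e | ∃ u, u ∈ M ∧ G.ends e = s(u, a)}

/-- The invariant for a component `K` of the remaining graph `G[S]`. -/
def GoodComp (G : FinMGraph) (S K : Set G.V) : Prop :=
  (∃ a ∈ K, (G.cutE K).ncard ≤ 2 ∧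
     ∀ e u b, G.ends e = s(u, b) → u ∈ K → b ∉ K → u = a) ∨
  (∃ (a b : G.V) (e1 e2 : G.E) (r : ℕ) (w : ℕ → G.V) (g : ℕ → G.E),
     a ∈ K ∧ b ∈ K ∧ a ≠ b ∧ e1 ≠ e2 ∧
     G.cutE K = {e1, e2} ∧
     (∃ o1, G.ends e1 = s(a, o1) ∧ o1 ∉ K) ∧
     (∃ o2, G.ends e2 = s(b, o2) ∧ o2 ∉ K) ∧
     1 ≤ r ∧ w 0 = a ∧ w r = b ∧
     (∀ s ≤ r, ∀ t ≤ r, w s = w t → s = t) ∧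
     (∀ t ≤ r, w t ∈ K) ∧
     (∀ t < r, G.ends (g t) = s(w t, w (t + 1)) ∧ G.noCyc S (g t)))

/-- The global invariant. -/
def Inv (G : FinMGraph) (S : Set G.V) : Prop :=
  ∀ x ∈ S, GoodComp G S (G.comp S x)

lemma GoodComp.mono {S S' K : Set G.V} (h : GoodComp G S K) (hS : S' ⊆ S) :
    GoodComp G S' K := by
  rcases h with h | ⟨a, b, e1, e2, r, w, g, h1, h2, h3, h4, h5, h6, h7, h8, h9, h10, h11, h12, h13⟩
  · exact Or.inl h
  · exact Or.inr ⟨a, b, e1, e2, r, w, g, h1, h2, h3, h4, h5, h6, h7, h8, h9, h10, h11, h12,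
      fun t ht => ⟨(h13 t ht).1, (h13 t ht).2.mono hS⟩⟩

/-- Characterization of the cut edges of a component of `G[S \ {a}]`. -/
lemma cutE_step_cases {S : Set G.V} {a y : G.V} (hyS : y ∈ S) (hya : y ≠ a) {e : G.E}
    (he : e ∈ G.cutE (G.comp (S \ {a}) y)) :
    e ∈ G.edgesTo (G.comp (S \ {a}) y) a ∨
      (∃ u o, G.ends e = s(u, o) ∧ u ∈ G.comp (S \ {a}) y ∧ u ∈ G.comp S y ∧
        o ∉ G.comp S y ∧ o ∉ S) := by
  obtain ⟨u, o, hends, huM, hoM⟩ := he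
  by_cases hoa : o = a
  · exact Or.inl ⟨u, huM, hoa ▸ hends⟩
  · right
    have hyS' : y ∈ S \ {a} := ⟨hyS, hya⟩
    have huS' : u ∈ S \ {a} := mem_comp_subset hyS' huM
    have hoS : o ∉ S := by
      intro hoS
      exact hoM (comp_closed huM ⟨huS', ⟨hoS, hoa⟩, e, hends⟩)
    have huK : u ∈ G.comp S y := comp_mono Set.diff_subset y huM
    have hoK : o ∉ G.comp S y := fun hc => hoS (mem_comp_subset hyS hc)
    exact ⟨u, o, hends, huM, huK, hoK, hoS⟩

lemma edgesTo_subset_cutE {S : Set G.V} {a y : G.V} (hya : y ≠ a) :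
    G.edgesTo (G.comp (S \ {a}) y) a ⊆ G.cutE (G.comp (S \ {a}) y) := by
  rintro e ⟨u, huM, hends⟩
  have haM : a ∉ G.comp (S \ {a}) y := by
    intro hc
    rcases mem_comp_cases hc with h | h
    · exact hya h.symm
    · exact h.2 rfl
  exact ⟨u, a, hends, huM, haM⟩

lemma not_mem_comp_diff {S : Set G.V} {a y : G.V} (hya : y ≠ a) :
    a ∉ G.comp (S \ {a}) y := by
  intro hc
  rcases mem_comp_cases hc with h | h
  · exact hya h.symm
  · exact h.2 rfl

end FinMGraph
namespace FinMGraph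

variable {G : FinMGraph}

/-- From two distinct edges joining the component of `y` in `G[S']` to `a ∉ S'`,
build a cycle through both, together with the connecting path. -/
lemma cycle_of_two_edgesTo {S' : Set G.V} {y a c d : G.V} {h1 h2 : G.E}
    (hy : y ∈ S') (ha : a ∉ S')
    (hne : h1 ≠ h2) (hc : c ∈ G.comp S' y) (hd : d ∈ G.comp S' y)
    (hh1 : G.ends h1 = s(c, a)) (hh2 : G.ends h2 = s(d, a)) :
    ∃ (r : ℕ) (w : ℕ → G.V) (g : ℕ → G.E) (k : ℕ) (v : ZMod k → G.V) (f : ZMod k → G.E),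
      w 0 = c ∧ w r = d ∧ (∀ s ≤ r, ∀ t ≤ r, w s = w t → s = t) ∧
      (∀ t ≤ r, w t ∈ G.comp S' y) ∧
      (∀ t < r, G.ends (g t) = s(w t, w (t + 1))) ∧
      G.IsCycleOn k v f ∧ (∃ i0, v i0 = a) ∧ h1 ∈ Set.range f ∧ h2 ∈ Set.range f ∧
      (∀ t < r, g t ∈ Set.range f) ∧ (∀ i, v i = a ∨ v i ∈ G.comp S' y) := by
  have hrtg : Relation.ReflTransGen (G.stepIn S') c d :=
    Relation.ReflTransGen.trans (comp_symm hc) hd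
  obtain ⟨r, w, g, hw0, hwr, hinj, hsteps⟩ := exists_inj_walk h1 hrtg
  have hmem : ∀ t ≤ r, w t ∈ G.comp S' y := by
    intro t ht
    have := walk_mem_comp hw0 (fun t' ht' => (hsteps t' ht').1) t ht
    rw [comp_eq_of_mem hc] at this
    exact this
  have hna : ∀ t ≤ r, w t ≠ a := by
    intro t ht hc'
    exact ha (hc' ▸ mem_comp_subset hy (hmem t ht))
  obtain ⟨k, v, f, hC, hia, hm1, hm2, _, hvmem, hgmem⟩ :=
    exists_cycle_of_path hinj hna (fun t ht => (hsteps t ht).2)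
      (by rw [hw0]; exact hh1.trans Sym2.eq_swap)
      (by rw [hwr]; exact hh2) hne
  refine ⟨r, w, g, k, v, f, hw0, hwr, hinj, hmem, fun t ht => (hsteps t ht).2,
    hC, hia, hm1, hm2, hgmem, ?_⟩
  intro i
  rcases hvmem i with h | ⟨t, ht, hvi⟩
  · exact Or.inl h
  · exact Or.inr (hvi ▸ hmem t ht)

/-- In a cactus there cannot be three distinct edges from a component to `a`. -/
lemma edgesTo_no_three (hG : G.IsCactus) {S' : Set G.V} {y a : G.V}
    (hy : y ∈ S') (ha : a ∉ S') {h1 h2 h3 : G.E}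
    (m1 : h1 ∈ G.edgesTo (G.comp S' y) a) (m2 : h2 ∈ G.edgesTo (G.comp S' y) a)
    (m3 : h3 ∈ G.edgesTo (G.comp S' y) a)
    (d12 : h1 ≠ h2) (d13 : h1 ≠ h3) (d23 : h2 ≠ h3) : False := by
  obtain ⟨c1, hc1, hh1⟩ := m1
  obtain ⟨c2, hc2, hh2⟩ := m2
  obtain ⟨c3, hc3, hh3⟩ := m3
  obtain ⟨r, w, g, k, v, f, _, _, _, _, _, hC12, ⟨i0, hi0⟩, hm1, hm2, _, _⟩ :=
    cycle_of_two_edgesTo hy ha d12 hc1 hc2 hh1 hh2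
  obtain ⟨r', w', g', k', v', f', _, _, _, _, _, hC13, _, hm1', hm3', _, _⟩ :=
    cycle_of_two_edgesTo hy ha d13 hc1 hc3 hh1 hh3
  have heq : Set.range f = Set.range f' := hG _ _ _ _ _ _ hC12 hC13 ⟨h1, hm1, hm1'⟩
  have hm3'' : h3 ∈ Set.range f := heq ▸ hm3'
  refine cycle_three_edges_at_vertex (i0 := i0) hC12 hm1 hm2 hm3'' d12 d13 d23 ?_ ?_ ?_
  · rw [hi0, hh1, Sym2.mem_iff]; exact Or.inr rfl
  · rw [hi0, hh2, Sym2.mem_iff]; exact Or.inr rfl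
  · rw [hi0, hh3, Sym2.mem_iff]; exact Or.inr rfl

/-- Two distinct attachment edges with distinct feet give a path whose edges lie on
no cycle inside `S'`. -/
lemma edgesTo_two_path (hG : G.IsCactus) {S' : Set G.V} {y a : G.V}
    (hy : y ∈ S') (ha : a ∉ S') {h1 h2 : G.E} {c d : G.V}
    (hne : h1 ≠ h2) (hc : c ∈ G.comp S' y) (hd : d ∈ G.comp S' y)
    (hh1 : G.ends h1 = s(c, a)) (hh2 : G.ends h2 = s(d, a)) (hcd : c ≠ d) :
    ∃ (r : ℕ) (w : ℕ → G.V) (g : ℕ → G.E), 1 ≤ r ∧ w 0 = c ∧ w r = d ∧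
      (∀ s ≤ r, ∀ t ≤ r, w s = w t → s = t) ∧ (∀ t ≤ r, w t ∈ G.comp S' y) ∧
      (∀ t < r, G.ends (g t) = s(w t, w (t + 1)) ∧ G.noCyc S' (g t)) := by
  obtain ⟨r, w, g, k, v, f, hw0, hwr, hinj, hmem, hends, hC12, hia, hm1, hm2, hgmem, hvmem⟩ :=
    cycle_of_two_edgesTo hy ha hne hc hd hh1 hh2
  have hr : 1 ≤ r := by
    rcases Nat.eq_zero_or_pos r with h | h
    · exact absurd (hw0 ▸ h ▸ hwr : c = d).symm (by rw [h] at hwr; rw [← hw0, ← hwr] at hcd; exact fun _ => hcd rfl)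
    · exact h
  refine ⟨r, w, g, hr, hw0, hwr, hinj, hmem, fun t ht => ⟨hends t ht, ?_⟩⟩
  rintro ⟨k', v', f', hC', hv'S, hgf'⟩
  have heq : Set.range f' = Set.range f := hG _ _ _ _ _ _ hC' hC12 ⟨g t, hgf', hgmem t ht⟩
  have hm1' : h1 ∈ Set.range f' := heq ▸ hm1
  obtain ⟨i', hi'⟩ := hm1'
  have hends' := hC'.2.2.2 i'
  rw [hi', hh1, Sym2.eq_iff] at hends'
  rcases hends' with ⟨_, hb⟩ | ⟨_, hb⟩
  · exact ha (by rw [hb]; exact hv'S (i' + 1))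
  · exact ha (by rw [hb]; exact hv'S i')

/-- If some attachment edge is on no cycle in `S ⊇ S' ∪ {a}`, it is the only one. -/
lemma edgesTo_unique_of_noCyc {S S' : Set G.V} {y a : G.V}
    (hy : y ∈ S') (ha : a ∉ S') (haS : a ∈ S) (hsub : S' ⊆ S)
    {g0 h : G.E} (hg0 : g0 ∈ G.edgesTo (G.comp S' y) a)
    (hh : h ∈ G.edgesTo (G.comp S' y) a) (hnc : G.noCyc S g0) : h = g0 := by
  by_contra hne
  obtain ⟨u0, hu0, hg0e⟩ := hg0
  obtain ⟨uh, huh, hhe⟩ := hh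
  obtain ⟨r, w, g, k, v, f, _, _, _, _, _, hC, _, hm1, hm2, _, hvmem⟩ :=
    cycle_of_two_edgesTo hy ha hne huh hu0 hhe hg0e
  apply hnc
  refine ⟨k, v, f, hC, ?_, hm2⟩
  intro i
  rcases hvmem i with hvi | hvi
  · exact hvi ▸ haS
  · exact hsub (mem_comp_subset hy hvi)

end FinMGraph
namespace FinMGraph

variable {G : FinMGraph}

lemma a_not_mem_comp_diff' {S : Set G.V} {a y : G.V} (hy : y ∈ S \ {a}) :
    a ∉ G.comp (S \ {a}) y :=
  fun hc => (by
    rcases mem_comp_cases hc with h | h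
    · exact hy.2 (h ▸ rfl)
    · exact h.2 rfl : False)

lemma goodComp_of_cut_eq_edgesTo (hG : G.IsCactus) {S : Set G.V} {a y : G.V}
    (hyS : y ∈ S \ {a})
    (hcut : G.cutE (G.comp (S \ {a}) y) = G.edgesTo (G.comp (S \ {a}) y) a) :
    GoodComp G (S \ {a}) (G.comp (S \ {a}) y) := by
  set S' := S \ {a} with hS'
  set M := G.comp S' y with hM
  have ha' : a ∉ S' := fun h => h.2 rfl
  have haM : a ∉ M := fun h => ha' (mem_comp_subset hyS h)
  by_cases htwo : ∃ h1 h2 c d, h1 ∈ G.edgesTo M a ∧ h2 ∈ G.edgesTo M a ∧ h1 ≠ h2 ∧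
      c ∈ M ∧ d ∈ M ∧ G.ends h1 = s(c, a) ∧ G.ends h2 = s(d, a) ∧ c ≠ d
  · obtain ⟨h1, h2, c, d, hm1, hm2, hne, hcM, hdM, hh1, hh2, hcd⟩ := htwo
    obtain ⟨r, w, g, hr, hw0, hwr, hinj, hmem, hprops⟩ :=
      edgesTo_two_path hG hyS ha' hne hcM hdM hh1 hh2 hcd
    right
    refine ⟨c, d, h1, h2, r, w, g, hcM, hdM, hcd, hne, ?_, ⟨a, hh1, haM⟩, ⟨a, hh2, haM⟩,
      hr, hw0, hwr, hinj, hmem, hprops⟩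
    rw [hcut]
    apply Set.Subset.antisymm
    · intro e he
      by_contra hee
      rw [Set.mem_insert_iff, Set.mem_singleton_iff] at hee
      push_neg at hee
      exact edgesTo_no_three hG hyS ha' hm1 hm2 he hne
        (fun hc => hee.1 hc.symm) (fun hc => hee.2 hc.symm)
    · intro e he
      rcases he with rfl | rfl
      · exact hm1
      · exact hm2
  · push_neg at htwo
    left
    by_cases hone : ∃ h0, h0 ∈ G.edgesTo M a
    · obtain ⟨h0, c0, hc0, hh0⟩ := hone
      refine ⟨c0, hc0, ?_, ?_⟩
      · -- ncard bound
        by_cases hsnd : ∃ h1, h1 ∈ G.edgesTo M a ∧ h1 ≠ h0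
        · obtain ⟨h1, hm1, hne10⟩ := hsnd
          have hsub : G.cutE M ⊆ {h0, h1} := by
            rw [hcut]
            intro e he
            by_contra hee
            rw [Set.mem_insert_iff, Set.mem_singleton_iff] at hee
            push_neg at hee
            exact edgesTo_no_three hG hyS ha' ⟨c0, hc0, hh0⟩ hm1 he
              (fun hc => hne10 hc.symm) (fun hc => hee.1 hc.symm) (fun hc => hee.2 hc.symm)
          calc (G.cutE M).ncard ≤ ({h0, h1} : Set G.E).ncard :=
                Set.ncard_le_ncard hsub (Set.toFinite _)
            _ ≤ 2 := by
                have := Set.ncard_insert_le h0 ({h1} : Set G.E)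
                simpa [Set.ncard_singleton] using this
        · push_neg at hsnd
          have hsub : G.cutE M ⊆ {h0} := by
            rw [hcut]
            intro e he
            exact hsnd e he
          calc (G.cutE M).ncard ≤ ({h0} : Set G.E).ncard :=
                Set.ncard_le_ncard hsub (Set.toFinite _)
            _ ≤ 2 := by simp [Set.ncard_singleton]
      · -- all feet are c0
        intro e u b hends huM hbM
        have he : e ∈ G.edgesTo M a := hcut ▸ (⟨u, b, hends, huM, hbM⟩ : e ∈ G.cutE M)
        obtain ⟨u', hu', he'⟩ := he
        have hub : u = u' := by
          rw [hends] at he'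
          rw [Sym2.eq_iff] at he'
          rcases he' with ⟨h1', _⟩ | ⟨h1', _⟩
          · exact h1'
          · exact absurd (h1' ▸ huM) haM
        subst hub
        by_cases hcase : e = h0
        · subst hcase
          rw [hh0, Sym2.eq_iff] at he'
          rcases he' with ⟨h1', _⟩ | ⟨h1', h2'⟩
          · exact h1'.symm
          · exact absurd hc0 (by rw [h1']; exact haM)
        · exact (htwo h0 e c0 u ⟨c0, hc0, hh0⟩ ⟨u, hu', he'⟩
            (fun hc => hcase hc.symm) hc0 hu' hh0 he').symm
    · push_neg at hone
      refine ⟨y, mem_comp_self _ _, ?_, ?_⟩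
      · have : G.cutE M = ∅ := by
          rw [hcut]
          ext e
          simp only [Set.mem_empty_iff_false, iff_false]
          exact hone e
        rw [this]
        simp
      · intro e u b hends huM hbM
        exact absurd (hcut ▸ (⟨u, b, hends, huM, hbM⟩ : e ∈ G.cutE M)) (hone e)

end FinMGraph
namespace FinMGraph

variable {G : FinMGraph}

lemma inv_step (hG : G.IsCactus) {S : Set G.V} (hI : Inv G S) {x0 : G.V} (hx0 : x0 ∈ S) :
    ∃ a ∈ S, (G.cutE (G.comp S a)).ncard ≤ 2 ∧ Inv G (S \ {a}) := by
  have hK := hI x0 hx0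
  rcases hK with ⟨a, haK, hbound, hall⟩ |
    ⟨a, b, e1, e2, r, w, g, haK, hbK, hab, he12, hcutK, ⟨o1, ho1e, ho1K⟩, ⟨o2, ho2e, ho2K⟩,
      hr, hw0, hwr, hinj, hwK, hprops⟩
  -- CASE I
  · have haS : a ∈ S := mem_comp_subset hx0 haK
    have hcompa : G.comp S a = G.comp S x0 := comp_eq_of_mem haK
    refine ⟨a, haS, by rw [hcompa]; exact hbound, ?_⟩
    intro y hy
    have hya : y ≠ a := fun h => hy.2 h
    by_cases haKy : a ∈ G.comp S y
    · -- the component of y in G[S \ {a}]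
      have hKy : G.comp S y = G.comp S x0 := (comp_eq_of_mem haKy).symm.trans hcompa
      apply goodComp_of_cut_eq_edgesTo hG hy
      apply Set.Subset.antisymm
      · intro e he
        rcases cutE_step_cases hy.1 hya he with h | ⟨u, o, hends, huM, huK', hoK', hoS⟩
        · exact h
        · exfalso
          have hua : u = a := hall e u o hends (hKy ▸ huK') (fun hc => hoK' (hKy ▸ hc))
          exact a_not_mem_comp_diff' hy (hua ▸ huM)
      · exact edgesTo_subset_cutE hya
    · rw [comp_erase_eq haKy]
      exact (hI y hy.1).mono Set.diff_subset
  -- CASE II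
  · have haS : a ∈ S := mem_comp_subset hx0 haK
    have hcompa : G.comp S a = G.comp S x0 := comp_eq_of_mem haK
    have hbnd : (G.cutE (G.comp S a)).ncard ≤ 2 := by
      rw [hcompa, hcutK]
      exact le_trans (Set.ncard_insert_le _ _) (by simp [Set.ncard_singleton])
    refine ⟨a, haS, hbnd, ?_⟩
    intro y hy
    have hya : y ≠ a := fun h => hy.2 h
    by_cases haKy : a ∈ G.comp S y
    swap
    · rw [comp_erase_eq haKy]
      exact (hI y hy.1).mono Set.diff_subset
    have hKy : G.comp S y = G.comp S x0 := (comp_eq_of_mem haKy).symm.trans hcompa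
    set S' := S \ {a} with hS'def
    set M := G.comp S' y with hMdef
    have haM : a ∉ M := a_not_mem_comp_diff' hy
    have haS' : a ∉ S' := fun h => h.2 rfl
    have hMK : M ⊆ G.comp S x0 := fun z hz => hKy ▸ comp_mono Set.diff_subset y hz
    have hWS' : ∀ t, 1 ≤ t → t ≤ r → w t ∈ S' := by
      intro t h1 h2
      refine ⟨mem_comp_subset hx0 (hwK t h2), ?_⟩
      intro hc
      have : w t = w 0 := by rw [hw0]; exact hc
      have := hinj t h2 0 (by omega) this
      omega
    have hstep' : ∀ t, 1 ≤ t → t + 1 ≤ r → G.stepIn S' (w t) (w (t + 1)) := by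
      intro t h1 h2
      exact ⟨hWS' t h1 (by omega), hWS' (t + 1) (by omega) h2, g t, (hprops t (by omega)).1⟩
    have hrtg : ∀ t, 1 ≤ t → t ≤ r → Relation.ReflTransGen (G.stepIn S') (w 1) (w t) := by
      intro t
      induction t with
      | zero => omega
      | succ t iht =>
          intro h1 h2
          rcases Nat.eq_zero_or_pos t with h | h
          · subst h; exact Relation.ReflTransGen.refl
          · exact Relation.ReflTransGen.tail (iht h (by omega)) (hstep' t h h2)
    have hg0ends : G.ends (g 0) = s(a, w 1) := by
      have := (hprops 0 (by omega)).1
      rwa [hw0] at this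
    have hg0cyc : G.noCyc S (g 0) := (hprops 0 (by omega)).2
    by_cases hw1M : w 1 ∈ M
    · -- component containing the stored path
      have hwtM : ∀ t, 1 ≤ t → t ≤ r → w t ∈ M := by
        intro t h1 h2
        have : w t ∈ G.comp S' (w 1) := hrtg t h1 h2
        rwa [comp_eq_of_mem hw1M] at this
      have hbM : b ∈ M := by rw [← hwr]; exact hwtM r hr le_rfl
      have ho2M : o2 ∉ M := fun hc => ho2K (hMK hc)
      have hg0e2 : g 0 ≠ e2 := by
        intro hc
        have h2 : s(a, w 1) = s(b, o2) := by rw [← hg0ends, hc, ho2e]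
        rw [Sym2.eq_iff] at h2
        rcases h2 with ⟨_, h2'⟩ | ⟨h2', _⟩
        · exact ho2K (h2' ▸ hMK (hwtM 1 le_rfl hr))
        · exact ho2K (h2' ▸ haK)
      have hcutM : G.cutE M = {g 0, e2} := by
        apply Set.Subset.antisymm
        · intro e he
          rcases cutE_step_cases hy.1 hya he with h | ⟨u, o, hends, huM, huK', hoK', hoS⟩
          · left
            exact edgesTo_unique_of_noCyc hy haS' haS Set.diff_subset
              ⟨w 1, hw1M, hg0ends.trans Sym2.eq_swap⟩ h hg0cyc
          · have heK : e ∈ G.cutE (G.comp S x0) :=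
              ⟨u, o, hends, hKy ▸ huK', fun hc => hoK' (hKy ▸ hc)⟩
            rw [hcutK] at heK
            rcases heK with rfl | rfl
            · exfalso
              have h2 : s(u, o) = s(a, o1) := by rw [← hends, ho1e]
              rw [Sym2.eq_iff] at h2
              rcases h2 with ⟨h2', _⟩ | ⟨h2', _⟩
              · exact haM (h2' ▸ huM)
              · exact ho1K (h2' ▸ hMK huM)
            · right; rfl
        · intro e he
          rcases he with rfl | rfl
          · exact ⟨w 1, a, hg0ends.trans Sym2.eq_swap, hw1M, haM⟩
          · exact ⟨b, o2, ho2e, hbM, ho2M⟩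
      by_cases hw1b : w 1 = b
      · -- only one path vertex left : single attachment vertex b
        left
        refine ⟨b, hbM, ?_, ?_⟩
        · rw [hcutM]
          exact le_trans (Set.ncard_insert_le _ _) (by simp [Set.ncard_singleton])
        · intro e u bb hends huM hbbM
          have he : e ∈ G.cutE M := ⟨u, bb, hends, huM, hbbM⟩
          rw [hcutM] at he
          rcases he with rfl | rfl
          · have h2 : s(u, bb) = s(a, w 1) := by rw [← hends, hg0ends]
            rw [Sym2.eq_iff] at h2
            rcases h2 with ⟨h2', _⟩ | ⟨h2', _⟩
            · exact absurd (h2' ▸ huM) haM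
            · exact h2'.trans hw1b
          · have h2 : s(u, bb) = s(b, o2) := by rw [← hends, ho2e]
            rw [Sym2.eq_iff] at h2
            rcases h2 with ⟨h2', _⟩ | ⟨h2', _⟩
            · exact h2'
            · exact absurd (h2' ▸ huM) ho2M
      · -- still a path from w 1 to b
        right
        have hr2 : 2 ≤ r := by
          by_contra h
          have hr1 : r = 1 := by omega
          exact hw1b (by rw [← hwr, hr1])
        refine ⟨w 1, b, g 0, e2, r - 1, (fun t => w (t + 1)), (fun t => g (t + 1)),
          hwtM 1 le_rfl hr, hbM, hw1b, hg0e2, hcutM, ⟨a, hg0ends.trans Sym2.eq_swap, haM⟩,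
          ⟨o2, ho2e, ho2M⟩, by omega, rfl,
          (by show w (r - 1 + 1) = b; rw [show r - 1 + 1 = r by omega, hwr]),
          ?_, ?_, ?_⟩
        · intro s hs t ht hst
          have := hinj (s + 1) (by omega) (t + 1) (by omega) hst
          omega
        · intro t ht
          exact hwtM (t + 1) (by omega) (by omega)
        · intro t ht
          refine ⟨(hprops (t + 1) (by omega)).1, ((hprops (t + 1) (by omega)).2).mono
            Set.diff_subset⟩
    · -- a component not containing the path
      apply goodComp_of_cut_eq_edgesTo hG hy
      apply Set.Subset.antisymm
      · intro e he
        rcases cutE_step_cases hy.1 hya he with h | ⟨u, o, hends, huM, huK', hoK', hoS⟩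
        · exact h
        · exfalso
          have heK : e ∈ G.cutE (G.comp S x0) :=
            ⟨u, o, hends, hKy ▸ huK', fun hc => hoK' (hKy ▸ hc)⟩
          rw [hcutK] at heK
          rcases heK with rfl | rfl
          · have h2 : s(u, o) = s(a, o1) := by rw [← hends, ho1e]
            rw [Sym2.eq_iff] at h2
            rcases h2 with ⟨h2', _⟩ | ⟨h2', _⟩
            · exact haM (h2' ▸ huM)
            · exact ho1K (h2' ▸ hMK huM)
          · have h2 : s(u, o) = s(b, o2) := by rw [← hends, ho2e]
            rw [Sym2.eq_iff] at h2
            rcases h2 with ⟨h2', _⟩ | ⟨h2', _⟩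
            · -- u = b lies in M, but then w 1 ∈ M
              subst h2'
              apply hw1M
              have hbM' : w r ∈ M := by rw [hwr]; exact huM
              have : w 1 ∈ G.comp S' (w r) := comp_symm (hrtg r hr le_rfl)
              rwa [comp_eq_of_mem hbM'] at this
            · exact ho2K (h2' ▸ hMK huM)
      · exact edgesTo_subset_cutE hya

end FinMGraph
namespace FinMGraph

variable {G : FinMGraph}

lemma inv_univ : Inv G Set.univ := by
  intro x _
  left
  have hempty : G.cutE (G.comp Set.univ x) = ∅ := by
    ext e
    simp only [Set.mem_empty_iff_false, iff_false]
    rintro ⟨u, o, hends, huM, hoM⟩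
    exact hoM (comp_closed huM ⟨Set.mem_univ u, Set.mem_univ o, e, hends⟩)
  refine ⟨x, mem_comp_self _ _, by rw [hempty]; simp, ?_⟩
  intro e u bb hends huM hbbM
  exact absurd (comp_closed huM ⟨Set.mem_univ u, Set.mem_univ bb, e, hends⟩) hbbM

lemma exists_good_list (hG : G.IsCactus) :
    ∀ (n : ℕ) (R : Finset G.V), R.card = n → Inv G ↑R →
      ∃ l : List G.V, l.Nodup ∧ l.toFinset = R ∧
        ∀ (k : ℕ) (hk : k < l.length),
          G.cut (G.comp {v | v ∈ l.drop k} (l.get ⟨k, hk⟩)) ≤ 2 := by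
  intro n
  induction n with
  | zero =>
      intro R hR _
      refine ⟨[], by simp, by simpa using (Finset.card_eq_zero.mp hR).symm, ?_⟩
      intro k hk
      simp at hk
  | succ n ih =>
      intro R hR hI
      have hne : R.Nonempty := by rw [← Finset.card_pos, hR]; omega
      obtain ⟨x0, hx0⟩ := hne
      obtain ⟨a, haR, hbnd, hI'⟩ := inv_step hG hI (show x0 ∈ (↑R : Set G.V) from hx0)
      have haR' : a ∈ R := haR
      have hcoe : ((R.erase a : Finset G.V) : Set G.V) = (↑R : Set G.V) \ {a} := by
        simp [Finset.coe_erase]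
      obtain ⟨l', hnd', htf', hgood'⟩ := ih (R.erase a)
        (by rw [Finset.card_erase_of_mem haR', hR]; rfl) (by rw [hcoe]; exact hI')
      have hanl : a ∉ l' := by
        intro hc
        have : a ∈ R.erase a := htf' ▸ List.mem_toFinset.mpr hc
        exact (Finset.mem_erase.mp this).1 rfl
      refine ⟨a :: l', List.nodup_cons.mpr ⟨hanl, hnd'⟩, ?_, ?_⟩
      · rw [List.toFinset_cons, htf', Finset.insert_erase haR']
      · intro k hk
        match k with
        | 0 =>
            have hset : {v | v ∈ (a :: l' : List G.V)} = (↑R : Set G.V) := by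
              ext v
              constructor
              · intro hv
                have : v ∈ (a :: l').toFinset := List.mem_toFinset.mpr hv
                rw [List.toFinset_cons, htf', Finset.insert_erase haR'] at this
                exact this
              · intro hv
                have : v ∈ (a :: l').toFinset := by
                  rw [List.toFinset_cons, htf', Finset.insert_erase haR']
                  exact hv
                exact List.mem_toFinset.mp this
            show G.cut (G.comp {v | v ∈ (a :: l' : List G.V)} a) ≤ 2
            rw [hset, cut_eq_ncard]
            exact hbnd
        | (k + 1) =>
            exact hgood' k (by simpa using hk)

lemma etw_le_two_of_isCactus (hG : G.IsCactus) : G.etw ≤ 2 := by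
  classical
  obtain ⟨l, hnd, htf, hgood⟩ :=
    exists_good_list hG (Finset.univ : Finset G.V).card Finset.univ rfl
      (by rw [Finset.coe_univ]; exact inv_univ)
  have hmem : ∀ v, v ∈ l := by
    intro v
    have : v ∈ l.toFinset := by rw [htf]; exact Finset.mem_univ v
    exact List.mem_toFinset.mp this
  have hlen : l.length = Fintype.card G.V := by
    rw [← List.toFinset_card_of_nodup hnd, htf, Finset.card_univ]
  set E0 : Fin l.length ≃ G.V := List.Nodup.getEquivOfForallMemList l hnd hmem with hE0
  set L : Fin (Fintype.card G.V) ≃ G.V := (finCongr hlen.symm).trans E0 with hL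
  have hgetL : ∀ i : Fin (Fintype.card G.V),
      L i = l.get ⟨(i : ℕ), by rw [hlen]; exact i.2⟩ := fun i => rfl
  have hsymm : ∀ (j : ℕ) (hj : j < l.length), (L.symm (l.get ⟨j, hj⟩) : ℕ) = j := by
    intro j hj
    have : L ⟨j, by omega⟩ = l.get ⟨j, hj⟩ := by rw [hgetL]
    rw [← this, Equiv.symm_apply_apply]
  have hdropmem : ∀ (m : ℕ) (v : G.V),
      v ∈ l.drop m ↔ ∃ (j : ℕ) (hj : j < l.length), m ≤ j ∧ l.get ⟨j, hj⟩ = v := by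
    intro m v
    constructor
    · intro hv
      obtain ⟨jj, hjj, hv'⟩ := List.mem_iff_getElem.mp hv
      have hjj' : m + jj < l.length := by
        have := List.length_drop (i := m) (l := l) ▸ hjj
        omega
      refine ⟨m + jj, hjj', by omega, ?_⟩
      rw [← hv', List.getElem_drop]
      rfl
    · rintro ⟨j, hj, hmj, rfl⟩
      have hld : j - m < (l.drop m).length := by
        rw [List.length_drop]
        omega
      have h2 : (l.drop m)[j - m]'hld = l[j]'hj := by
        rw [List.getElem_drop]
        congr 1
        omega
      exact List.mem_iff_getElem.mpr ⟨j - m, hld, h2⟩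
  apply Nat.sInf_le
  refine ⟨L, ?_⟩
  intro i
  have hil : (i : ℕ) < l.length := by rw [hlen]; exact i.2
  have htail : G.tail L i = {v | v ∈ l.drop (i : ℕ)} := by
    ext v
    constructor
    · intro hle
      have hle' : (i : ℕ) ≤ (L.symm v : ℕ) := Fin.le_def.mp hle
      exact (hdropmem _ v).mpr ⟨(L.symm v : ℕ), by rw [hlen]; exact (L.symm v).2, hle',
        (hgetL (L.symm v)).symm.trans (Equiv.apply_symm_apply _ _)⟩
    · intro hv
      obtain ⟨j, hj, hmj, hjv⟩ := (hdropmem _ v).mp hv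
      show i ≤ L.symm v
      rw [← hjv, Fin.le_def, hsymm j hj]
      exact hmj
  have hLi : L i = l.get ⟨(i : ℕ), hil⟩ := hgetL i
  show G.cut (G.comp (G.tail L i) (L i)) ≤ 2
  rw [htail, hLi]
  exact hgood (i : ℕ) hil

end FinMGraph

/-- A graph `G` has edge-treewidth at most 2 if and only if `G` is a cactus
graph (every edge of `G` belongs to at most one cycle). -/
theorem etw_le_two_iff_isCactus (G : FinMGraph) : G.etw ≤ 2 ↔ G.IsCactus :=
  ⟨FinMGraph.isCactus_of_etw_le_two, FinMGraph.etw_le_two_of_isCactus⟩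
end

section
/- Every forest G admits a layout L such that max_i δ^ec(i) ≤ 1, i.e., etw(G) ≤ 1. -/
open Classical

namespace ForestAux

open FinMGraph Relation

variable (G : FinMGraph)

/-- Adjacency in `G`. -/
def adj (a b : G.V) : Prop := ∃ e : G.E, G.ends e = s(a, b)

lemma adj_symm : Symmetric (adj G) := by
  rintro a b ⟨e, he⟩; exact ⟨e, by rw [he, Sym2.eq_swap]⟩

lemma adj_irrefl (a : G.V) : ¬ adj G a a := by
  rintro ⟨e, he⟩
  exact G.loopless e (by rw [he]; exact Sym2.mk_isDiag_iff.2 rfl)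

/-- The associated simple graph. -/
def SG : SimpleGraph G.V where
  Adj := adj G
  symm := ⟨fun _ _ h => adj_symm G h⟩
  loopless := ⟨adj_irrefl G⟩

/-- Reachability. -/
def Reach (a b : G.V) : Prop := Relation.ReflTransGen (adj G) a b

lemma reach_symm : Symmetric (Reach G) :=
  fun _ _ h => @Std.Symm.symm _ _ (@Relation.ReflTransGen.symmetric _ _ ⟨fun _ _ h => adj_symm G h⟩) _ _ h

lemma reach_iff (a b : G.V) : (SG G).Reachable a b ↔ Reach G a b :=
  SimpleGraph.reachable_iff_reflTransGen a b

/-- The connected component of `v`, as a finset. -/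
noncomputable def compF (v : G.V) : Finset G.V :=
  @Finset.filter _ (fun w => Reach G v w) (fun _ => Classical.propDecidable _) Finset.univ

lemma mem_compF {v w : G.V} : w ∈ compF G v ↔ Reach G v w := by
  simp [compF]

lemma compF_congr {a b : G.V} (h : Reach G a b) : compF G a = compF G b := by
  ext w
  simp only [mem_compF]
  exact ⟨fun hw => (reach_symm G h).trans hw, fun hw => h.trans hw⟩

noncomputable def e0 : G.V ≃ Fin (Fintype.card G.V) := Fintype.equivFin G.V

/-- The root of the component of `v`. -/
noncomputable def root (v : G.V) : G.V :=
  (e0 G).symm (WithTop.untopD (e0 G v) (((compF G v).image (e0 G)).min))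

lemma min_eq (v : G.V) : ∃ m : Fin (Fintype.card G.V), (((compF G v).image (e0 G)).min) = (m : WithTop _) ∧ root G v = (e0 G).symm m
    ∧ (e0 G).symm m ∈ compF G v := by
  have hne : ((compF G v).image (e0 G)).Nonempty :=
    Finset.image_nonempty.2 ⟨v, (mem_compF G).2 Relation.ReflTransGen.refl⟩
  obtain ⟨m, hm⟩ := Finset.min_of_nonempty hne
  refine ⟨m, hm, by rw [root, hm, WithTop.untopD_coe], ?_⟩
  obtain ⟨w, hw, hw'⟩ := Finset.mem_image.1 (Finset.mem_of_min hm)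
  rwa [← hw', Equiv.symm_apply_apply]

lemma root_mem (v : G.V) : root G v ∈ compF G v := by
  obtain ⟨m, _, h2, h3⟩ := min_eq G v
  rwa [h2]

lemma reach_root (v : G.V) : Reach G v (root G v) :=
  (mem_compF G).1 (root_mem G v)

lemma root_congr {a b : G.V} (h : Reach G a b) : root G a = root G b := by
  obtain ⟨m, h1, h2, _⟩ := min_eq G a
  obtain ⟨m', h1', h2', _⟩ := min_eq G b
  rw [compF_congr G h, h1'] at h1
  rw [h2, h2', (WithTop.coe_inj).1 h1]

lemma exists_parent {v : G.V} (h : v ≠ root G v) :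
    ∃ w, adj G v w ∧ (SG G).dist w (root G v) < (SG G).dist v (root G v) := by
  have hr : (SG G).Reachable v (root G v) := (reach_iff G _ _).2 (reach_root G v)
  obtain ⟨p, hp⟩ := hr.exists_walk_length_eq_dist
  have main : ∀ (r : G.V) (q : (SG G).Walk v r), r = root G v →
      q.length = (SG G).dist v (root G v) →
      ∃ w, adj G v w ∧ (SG G).dist w (root G v) < (SG G).dist v (root G v) := by
    intro r q
    cases q with
    | nil => intro hre _; exact absurd hre h
    | cons ha q' =>
        intro hre hq
        subst hre
        refine ⟨_, ha, ?_⟩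
        have h1 := SimpleGraph.dist_le q'
        rw [SimpleGraph.Walk.length_cons] at hq
        omega
  exact main _ p rfl hp

/-- The parent of `v` in its rooted component. -/
noncomputable def parent (v : G.V) : G.V :=
  if h : v = root G v then v else Classical.choose (exists_parent G h)

lemma parent_spec {v : G.V} (h : v ≠ root G v) :
    adj G v (parent G v) ∧ (SG G).dist (parent G v) (root G v) < (SG G).dist v (root G v) := by
  rw [parent, dif_neg h]
  exact Classical.choose_spec (exists_parent G h)

lemma parent_root (v : G.V) : root G (parent G v) = root G v := by
  by_cases h : v = root G v
  · rw [parent, dif_pos h]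
  · exact (root_congr G (Relation.ReflTransGen.single ((parent_spec G h).1))).symm

lemma parent_ne {v : G.V} (h : v ≠ root G v) : parent G v ≠ v := by
  intro he
  have := (parent_spec G h).1
  rw [he] at this
  exact adj_irrefl G v this

/-- The path from the root to `v`, listing vertices in order. -/
noncomputable def key (v : G.V) : List G.V :=
  if h : v = root G v then [v] else key (parent G v) ++ [v]
termination_by (SG G).dist v (root G v)
decreasing_by
  rw [parent_root]
  exact (parent_spec G h).2

lemma key_concat (v : G.V) : ∃ l, key G v = l ++ [v] := by
  rw [key]
  split
  · exact ⟨[], rfl⟩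
  · exact ⟨_, rfl⟩

lemma key_inj : Function.Injective (key G) := by
  intro a b h
  obtain ⟨l1, h1⟩ := key_concat G a
  obtain ⟨l2, h2⟩ := key_concat G b
  rw [h1, h2] at h
  have := congrArg List.getLast? h
  rw [List.getLast?_append_cons, List.getLast?_append_cons] at this
  simpa using this

lemma key_parent_prefix (v : G.V) : key G (parent G v) <+: key G v := by
  by_cases h : v = root G v
  · rw [parent, dif_pos h]
  · conv_rhs => rw [key, dif_neg h]
    exact List.prefix_append _ _

lemma key_ancestor_prefix (k : ℕ) (v : G.V) : key G ((parent G)^[k] v) <+: key G v := by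
  induction k with
  | zero => exact List.prefix_refl _
  | succ n ih =>
      rw [Function.iterate_succ_apply']
      exact (key_parent_prefix G _).trans ih

/-- `keyF`: the root path, translated into `Fin n`. -/
noncomputable def keyF (v : G.V) : List (Fin (Fintype.card G.V)) := (key G v).map (e0 G)

lemma keyF_inj : Function.Injective (keyF G) := fun a b h =>
  key_inj G (List.map_injective_iff.2 (e0 G).injective h)

lemma lex_lt_append {β : Type*} [LinearOrder β] (l : List β) (a : β) (t : List β) :
    l < l ++ a :: t := by
  induction l with
  | nil => exact List.Lex.nil
  | cons x l ih => exact List.Lex.cons ih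

lemma le_of_prefix {β : Type*} [LinearOrder β] {l1 l2 : List β} (h : l1 <+: l2) : l1 ≤ l2 := by
  obtain ⟨t, rfl⟩ := h
  cases t with
  | nil => simp
  | cons a t => exact le_of_lt (lex_lt_append l1 a t)

lemma keyF_parent_lt {v : G.V} (h : v ≠ root G v) : keyF G (parent G v) < keyF G v := by
  have hk : key G v = key G (parent G v) ++ [v] := by rw [key]; exact dif_neg h
  rw [keyF, keyF, hk, List.map_append]
  exact lex_lt_append _ _ _

lemma keyF_le_of_desc {v w : G.V} (h : ∃ k, (parent G)^[k] w = v) : keyF G v ≤ keyF G w := by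
  obtain ⟨k, rfl⟩ := h
  exact le_of_prefix ((key_ancestor_prefix G k w).map _)

lemma edge_unique (hG : G.IsForest) {e f : G.E} {a b : G.V}
    (he : G.ends e = s(a, b)) (hf : G.ends f = s(a, b)) : e = f := by
  by_contra hne
  exact hG e a b he (Relation.ReflTransGen.single ⟨f, Ne.symm hne, hf⟩)

lemma chain_to_root (R : G.V → G.V → Prop) (hR : ∀ x, x ≠ root G x → R x (parent G x))
    (v : G.V) : Relation.ReflTransGen R v (root G v) := by
  have H : ∀ (m : ℕ) (v : G.V), (SG G).dist v (root G v) ≤ m →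
      Relation.ReflTransGen R v (root G v) := by
    intro m
    induction m with
    | zero =>
        intro v hv
        have hreach : (SG G).Reachable v (root G v) := (reach_iff G _ _).2 (reach_root G v)
        have hveq : v = root G v := hreach.dist_eq_zero_iff.1 (Nat.le_zero.1 hv)
        rw [← hveq]
    | succ m ih =>
        intro v hv
        by_cases hroot : v = root G v
        · rw [← hroot]
        · have hs := parent_spec G hroot
          have hd : (SG G).dist (parent G v) (root G (parent G v)) ≤ m := by
            rw [parent_root]; omega
          have hch := ih (parent G v) hd
          rw [parent_root] at hch
          exact Relation.ReflTransGen.head (hR v hroot) hch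
  exact H _ v le_rfl

lemma adj_parent (hG : G.IsForest) {a b : G.V} (hab : adj G a b) :
    parent G a = b ∨ parent G b = a := by
  by_contra hcon
  push_neg at hcon
  obtain ⟨h1, h2⟩ := hcon
  obtain ⟨e, he⟩ := hab
  have hstep : ∀ x : G.V, x ≠ root G x →
      (fun x y => ∃ f, f ≠ e ∧ G.ends f = s(x, y)) x (parent G x) := by
    intro x hx
    obtain ⟨f, hf⟩ := (parent_spec G hx).1
    refine ⟨f, ?_, hf⟩
    rintro rfl
    rw [he] at hf
    rcases Sym2.eq_iff.mp hf with ⟨ha', hb'⟩ | ⟨ha', hb'⟩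
    · exact h1 (by rw [ha', hb'])
    · exact h2 (by rw [hb', ha'])
  have Rsymm : Symmetric (fun x y => ∃ f, f ≠ e ∧ G.ends f = s(x, y)) := by
    rintro x y ⟨f, hf1, hf2⟩
    exact ⟨f, hf1, by rw [hf2, Sym2.eq_swap]⟩
  have ca := chain_to_root G (fun x y => ∃ f, f ≠ e ∧ G.ends f = s(x, y)) hstep a
  have cb := chain_to_root G (fun x y => ∃ f, f ≠ e ∧ G.ends f = s(x, y)) hstep b
  have hroot : root G a = root G b := root_congr G (Relation.ReflTransGen.single ⟨e, he⟩)
  have cb' := @Std.Symm.symm _ _ (@Relation.ReflTransGen.symmetric _ (fun x y => ∃ f, f ≠ e ∧ G.ends f = s(x, y)) ⟨fun _ _ h => Rsymm h⟩) _ _ cb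
  rw [← hroot] at cb'
  exact hG e a b he (ca.trans cb')

lemma comp_desc (hG : G.IsForest) (v : G.V) {w : G.V}
    (hw : w ∈ G.comp {u | keyF G v ≤ keyF G u} v) : ∃ k, (parent G)^[k] w = v := by
  simp only [FinMGraph.comp, Set.mem_setOf_eq] at hw
  induction hw with
  | refl => exact ⟨0, rfl⟩
  | @tail b c _ hbc ih =>
      obtain ⟨hbS, hcS, e, he⟩ := hbc
      obtain ⟨k, hk⟩ := ih
      rcases adj_parent G hG ⟨e, he⟩ with hpb | hpc
      · -- parent b = c
        cases k with
        | zero =>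
            simp only [Function.iterate_zero, id] at hk
            subst hk
            by_cases hroot : b = root G b
            · have : parent G b = b := by rw [parent, dif_pos hroot]
              rw [this] at hpb
              exact absurd ⟨e, hpb ▸ he⟩ (adj_irrefl G b)
            · exfalso
              have hlt := keyF_parent_lt G hroot
              rw [hpb] at hlt
              exact absurd hcS (not_le.2 hlt)
        | succ k' =>
            refine ⟨k', ?_⟩
            rw [← hk, Function.iterate_succ_apply, hpb]
      · exact ⟨k + 1, by rw [Function.iterate_succ_apply, hpc, hk]⟩

lemma comp_sub (v : G.V) {w : G.V}
    (hw : w ∈ G.comp {u | keyF G v ≤ keyF G u} v) : keyF G v ≤ keyF G w := by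
  simp only [FinMGraph.comp, Set.mem_setOf_eq] at hw
  induction hw with
  | refl => exact le_rfl
  | @tail b c _ hbc _ => exact hbc.2.1

lemma cut_le_one (hG : G.IsForest) (v : G.V) :
    G.cut (G.comp {u | keyF G v ≤ keyF G u} v) ≤ 1 := by
  set S : Set G.V := {u | keyF G v ≤ keyF G u} with hS
  have key1 : ∀ (g : G.E) (x y : G.V), G.ends g = s(x, y) → x ∈ G.comp S v →
      y ∉ G.comp S v → x = v ∧ y = parent G v := by
    intro g x y hg hxC hyC
    obtain ⟨k, hk⟩ := comp_desc G hG v hxC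
    have hyC' : (∃ k, (parent G)^[k] y = v) → False := by
      intro hdesc
      have hyS : y ∈ S := keyF_le_of_desc G hdesc
      have hxS : x ∈ S := comp_sub G v hxC
      exact hyC (Relation.ReflTransGen.tail hxC ⟨hxS, hyS, g, hg⟩)
    rcases adj_parent G hG ⟨g, hg⟩ with hxy | hyx
    · -- parent x = y
      cases k with
      | zero =>
          simp only [Function.iterate_zero, id] at hk
          subst hk
          exact ⟨rfl, hxy.symm⟩
      | succ k' =>
          exact absurd ⟨k', by rw [← hk, Function.iterate_succ_apply, hxy]⟩ hyC'
    · -- parent y = x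
      exact absurd ⟨k + 1, by rw [Function.iterate_succ_apply, hyx, hk]⟩ hyC'
  rw [FinMGraph.cut]
  have hsub : Subsingleton
      {e : G.E // ∃ a b, G.ends e = s(a, b) ∧ a ∈ G.comp S v ∧ b ∉ G.comp S v} := by
    constructor
    rintro ⟨e, hew⟩ ⟨f, hfw⟩
    obtain ⟨a, b, he, haC, hbC⟩ := hew
    obtain ⟨a', b', hf, haC', hbC'⟩ := hfw
    obtain ⟨rfl, rfl⟩ := key1 e a b he haC hbC
    obtain ⟨rfl, rfl⟩ := key1 f a' b' hf haC' hbC'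
    exact Subtype.ext (edge_unique G hG he hf)
  rw [Nat.card_eq_fintype_card]
  exact Fintype.card_le_one_iff_subsingleton.2 hsub

end ForestAux
/-- Every forest `G` admits a layout `L` such that `max_i δ^ec(i) ≤ 1`,
i.e. `etw(G) ≤ 1`. -/
theorem forest_layout_cost_le_one (G : FinMGraph) (hG : G.IsForest) :
    (∃ L : Fin (Fintype.card G.V) ≃ G.V, ∀ i, G.cost L i ≤ 1) ∧ G.etw ≤ 1 := by
  letI : LinearOrder G.V := LinearOrder.lift' (ForestAux.keyF G) (ForestAux.keyF_inj G)
  let Liso : Fin (Fintype.card G.V) ≃o G.V := monoEquivOfFin G.V rfl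
  let L : Fin (Fintype.card G.V) ≃ G.V := Liso.toEquiv
  have hc : ∀ i, G.cost L i ≤ 1 := by
    intro i
    have htail : G.tail L i = {u | ForestAux.keyF G (L i) ≤ ForestAux.keyF G u} := by
      ext w
      show i ≤ L.symm w ↔ _
      rw [show L.symm w = Liso.symm w from rfl, Liso.le_symm_apply]
      exact Iff.rfl
    show G.cut (G.comp (G.tail L i) (L i)) ≤ 1
    rw [htail]
    exact ForestAux.cut_le_one G hG (L i)
  exact ⟨⟨L, hc⟩, Nat.sInf_le ⟨L, hc⟩⟩
end

section
/- If a graph G contains two vertices u, v joined by three pairwise edge-disjoint paths, then etw(G) ≥ 3. -/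
open Classical

lemma walk_cross (G : FinMGraph) (X : Set G.V) {a b : G.V} {es : List G.E}
    (w : G.Walk a b es) :
    (a ∈ X ∧ b ∉ X) ∨ (a ∉ X ∧ b ∈ X) →
    ∃ e ∈ es, ∃ p q, G.ends e = s(p, q) ∧ p ∈ X ∧ q ∉ X := by
  induction w with
  | nil v => rintro (⟨h1, h2⟩ | ⟨h1, h2⟩)
             · exact absurd h1 h2
             · exact absurd h2 h1
  | @cons a b c e es he _ ih =>
    intro h
    by_cases hb : b ∈ X
    · rcases h with ⟨ha, hc⟩ | ⟨ha, hc⟩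
      · obtain ⟨f, hf, rest⟩ := ih (Or.inl ⟨hb, hc⟩)
        exact ⟨f, List.mem_cons_of_mem _ hf, rest⟩
      · exact ⟨e, List.mem_cons_self, b, a, by rw [he, Sym2.eq_swap], hb, ha⟩
    · rcases h with ⟨ha, hc⟩ | ⟨ha, hc⟩
      · exact ⟨e, List.mem_cons_self, a, b, he, ha, hb⟩
      · obtain ⟨f, hf, rest⟩ := ih (Or.inr ⟨hb, hc⟩)
        exact ⟨f, List.mem_cons_of_mem _ hf, rest⟩

lemma comp_subset (G : FinMGraph) (S : Set G.V) (v : G.V) (hv : v ∈ S) :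
    G.comp S v ⊆ S := by
  intro w hw
  induction hw with
  | refl => exact hv
  | tail _ h _ => exact h.2.1

lemma three_le_nat_card {α : Type*} [Finite α] (p : α → Prop) (a b c : α)
    (ha : p a) (hb : p b) (hc : p c) (hab : a ≠ b) (hac : a ≠ c) (hbc : b ≠ c) :
    3 ≤ Nat.card {x // p x} := by
  have hinj : Function.Injective
      (fun i : Fin 3 => (![⟨a, ha⟩, ⟨b, hb⟩, ⟨c, hc⟩] i : {x // p x})) := by
    intro i j hij
    fin_cases i <;> fin_cases j <;> simp_all [Subtype.ext_iff]
  simpa using Nat.card_le_card_of_injective _ hinj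

/-- If a graph `G` contains two vertices `u, v` joined by three pairwise
edge-disjoint paths, then `etw(G) ≥ 3`. -/
theorem three_le_etw_of_three_edge_disjoint_paths (G : FinMGraph) (u v : G.V) (huv : u ≠ v)
    (es₁ es₂ es₃ : List G.E)
    (h₁ : G.Walk u v es₁) (h₂ : G.Walk u v es₂) (h₃ : G.Walk u v es₃)
    (d₁₂ : ∀ e, e ∈ es₁ → e ∉ es₂)
    (d₁₃ : ∀ e, e ∈ es₁ → e ∉ es₃)
    (d₂₃ : ∀ e, e ∈ es₂ → e ∉ es₃) :
    3 ≤ G.etw := by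
  refine le_csInf ⟨Fintype.card G.E, (Fintype.equivFin G.V).symm, fun i => ?_⟩ ?_
  · show G.cut _ ≤ _
    unfold FinMGraph.cut
    calc Nat.card _ ≤ Nat.card G.E :=
          Nat.card_le_card_of_injective _ Subtype.val_injective
      _ = Fintype.card G.E := Nat.card_eq_fintype_card
  · rintro k ⟨L, hL⟩
    have main : ∀ i : Fin (Fintype.card G.V),
        ((u ∈ G.comp (G.tail L i) (L i) ∧ v ∉ G.comp (G.tail L i) (L i)) ∨
          (u ∉ G.comp (G.tail L i) (L i) ∧ v ∈ G.comp (G.tail L i) (L i))) → 3 ≤ k := by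
      intro i h
      set X := G.comp (G.tail L i) (L i) with hX
      obtain ⟨e₁, he₁, p₁⟩ := walk_cross G X h₁ h
      obtain ⟨e₂, he₂, p₂⟩ := walk_cross G X h₂ h
      obtain ⟨e₃, he₃, p₃⟩ := walk_cross G X h₃ h
      have h3 : 3 ≤ G.cost L i := by
        show 3 ≤ Nat.card {e : G.E // ∃ a b, G.ends e = s(a, b) ∧ a ∈ X ∧ b ∉ X}
        exact three_le_nat_card _ e₁ e₂ e₃
          p₁ p₂ p₃
          (fun h => d₁₂ _ he₁ (h ▸ he₂))
          (fun h => d₁₃ _ he₁ (h ▸ he₃))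
          (fun h => d₂₃ _ he₂ (h ▸ he₃))
      exact h3.trans (hL i)
    rcases lt_trichotomy (L.symm u) (L.symm v) with hlt | heq | hlt
    · refine main (L.symm v) (Or.inr ⟨?_, ?_⟩)
      · intro hu
        have hmem : u ∈ G.tail L (L.symm v) :=
          comp_subset G _ _ (by simp [FinMGraph.tail]) hu
        exact absurd hmem (not_le.mpr hlt)
      · rw [L.apply_symm_apply]
        exact Relation.ReflTransGen.refl
    · exact absurd (L.symm.injective heq) huv
    · refine main (L.symm u) (Or.inl ⟨?_, ?_⟩)
      · rw [L.apply_symm_apply]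
        exact Relation.ReflTransGen.refl
      · intro hv
        have hmem : v ∈ G.tail L (L.symm u) :=
          comp_subset G _ _ (by simp [FinMGraph.tail]) hv
        exact absurd hmem (not_le.mpr hlt)
end
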